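/- arXiv:2005.09798 — 3 statements merged into one kernel-verified Lean document; each statement's English description precedes it below -/
import Mathlib

section
/- Let N be a normal subgroup of a finite group G, and let Ĝ be the right regular representation of G inside the symmetric group on G. Then Ĝ equals its own normalizer in W(G,N) if and only if both of the following hold: (1) the center Z(N) is contained in the center Z(G), and (2) the order of the abelianization of G/N is relatively prime to |Z(N)|. -/
/-! Common definitions: Cayley digraphs, digraph automorphism groups,
DRRs/GRRs, detecting groups, the regular representation, the group `W(G,N)`,
wreath and cartesian products of digraphs, and the wreath product of groups. -/

universe u

/-- The adjacency relation of the Cayley digraph `Cay(G,S)`: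
there is a directed edge from `g₁` to `g₂` iff `g₂ = s * g₁` for some `s ∈ S`. -/
def cayAdj {G : Type*} [Group G] (S : Set G) : G → G → Prop :=
  fun g₁ g₂ => ∃ s ∈ S, g₂ = s * g₁

/-- The automorphism group of a digraph (given by its adjacency relation),
as a subgroup of the symmetric group on the vertices. -/
def digraphAut {V : Type*} (Adj : V → V → Prop) : Subgroup (Equiv.Perm V) where
  carrier := {σ | ∀ x y, Adj (σ x) (σ y) ↔ Adj x y}
  one_mem' := fun _ _ => Iff.rfl
  mul_mem' := by
    intro σ τ hσ hτ x y
    simp only [Equiv.Perm.mul_apply]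
    exact (hσ _ _).trans (hτ _ _)
  inv_mem' := by
    intro σ hσ x y
    have h := (hσ (σ⁻¹ x) (σ⁻¹ y)).symm
    simpa using h

/-- A digraph is a DRR (digraphical regular representation) of the group `G` if its
automorphism group is isomorphic to `G` and acts regularly on the vertex set. -/
def IsDRR (G : Type*) [Group G] {V : Type*} (Adj : V → V → Prop) : Prop :=
  Nonempty (digraphAut Adj ≃* G) ∧
    ∀ v w : V, ∃! σ : digraphAut Adj, (σ : Equiv.Perm V) v = w

/-- A GRR (graphical regular representation) of `G` is a DRR that is a graph. -/
def IsGRR (G : Type*) [Group G] {V : Type*} (Adj : V → V → Prop) : Prop :=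
  Symmetric Adj ∧ IsDRR G Adj

/-- `Aut(G,S)` is trivial: the only group automorphism `φ` of `G` with `φ(S) = S`
is the identity. -/
def AutGSTrivial {G : Type*} [Group G] (S : Set G) : Prop :=
  ∀ φ : MulAut G, ⇑φ '' S = S → φ = 1

/-- `G` is DRR-detecting: for every `S ⊆ G`, if `Aut(G,S) = 1` then
`Cay(G,S)` is a DRR of `G`. -/
def DRRDetecting (G : Type*) [Group G] : Prop :=
  ∀ S : Set G, AutGSTrivial S → IsDRR G (cayAdj S)

/-- `G` is GRR-detecting: for every inverse-closed `S ⊆ G`, if `Aut(G,S) = 1` then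
`Cay(G,S)` is a GRR of `G`. -/
def GRRDetecting (G : Type*) [Group G] : Prop :=
  ∀ S : Set G, (∀ s ∈ S, s⁻¹ ∈ S) → AutGSTrivial S → IsGRR G (cayAdj S)

/-- `G` admits a DRR (equivalently, some Cayley digraph of `G` is a DRR). -/
def HasDRR (G : Type*) [Group G] : Prop :=
  ∃ S : Set G, IsDRR G (cayAdj S)

/-- `G` admits a GRR (equivalently, some Cayley graph of `G` is a GRR). -/
def HasGRR (G : Type*) [Group G] : Prop :=
  ∃ S : Set G, (∀ s ∈ S, s⁻¹ ∈ S) ∧ IsGRR G (cayAdj S)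

/-- The right regular representation `Ĝ = {x ↦ x·g : g ∈ G}` of `G`,
as a subgroup of the symmetric group on `G`. -/
def regularRep (G : Type*) [Group G] : Subgroup (Equiv.Perm G) where
  carrier := {σ | ∃ g : G, ∀ x, σ x = x * g}
  one_mem' := ⟨1, fun x => (mul_one x).symm⟩
  mul_mem' := by
    rintro σ τ ⟨g, hg⟩ ⟨h, hh⟩
    exact ⟨h * g, fun x => by
      simp only [Equiv.Perm.mul_apply, hg, hh, mul_assoc]⟩
  inv_mem' := by
    rintro σ ⟨g, hg⟩
    refine ⟨g⁻¹, fun x => ?_⟩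
    have h1 : σ (x * g⁻¹) = x := by rw [hg]; group
    calc σ⁻¹ x = σ⁻¹ (σ (x * g⁻¹)) := by rw [h1]
      _ = x * g⁻¹ := by simp

/-- The set `W(G,N)` of all permutations `φ_{c,f} : x ↦ x·c·f(x̄)` of `G`,
where `c ∈ G` and `f : G/N → N`. -/
def Wset (G : Type*) [Group G] (N : Subgroup G) [N.Normal] : Set (Equiv.Perm G) :=
  {σ | ∃ (c : G) (f : G ⧸ N → G), (∀ q, f q ∈ N) ∧
      ∀ x : G, σ x = x * c * f (QuotientGroup.mk x)}

/-- The wreath product `X ≀ Y` of two digraphs. -/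
def wreathAdj {X Y : Type*} (A : X → X → Prop) (B : Y → Y → Prop) :
    X × Y → X × Y → Prop :=
  fun p q => A p.1 q.1 ∨ (p.1 = q.1 ∧ B p.2 q.2)

/-- The cartesian product `X □ Y` of two digraphs. -/
def cartAdj {X Y : Type*} (A : X → X → Prop) (B : Y → Y → Prop) :
    X × Y → X × Y → Prop :=
  fun p q => (p.1 = q.1 ∧ B p.2 q.2) ∨ (p.2 = q.2 ∧ A p.1 q.1)

/-- A digraph is prime with respect to the cartesian product if it has more than one
vertex and is not isomorphic to a cartesian product of two digraphs,
each with more than one vertex. -/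
def IsPrimeDigraph {V : Type u} (Adj : V → V → Prop) : Prop :=
  (∃ x y : V, x ≠ y) ∧
    ¬ ∃ (X Y : Type u) (A : X → X → Prop) (B : Y → Y → Prop) (e : V ≃ X × Y),
        (∃ x₁ x₂ : X, x₁ ≠ x₂) ∧ (∃ y₁ y₂ : Y, y₁ ≠ y₂) ∧
          ∀ v w : V, Adj v w ↔ cartAdj A B (e v) (e w)

/-- A digraph is weakly connected if any two vertices are joined by a path in the
underlying undirected graph. -/
def WeaklyConnected {V : Type*} (Adj : V → V → Prop) : Prop :=
  ∀ x y : V, Relation.ReflTransGen (fun a b => Adj a b ∨ Adj b a) x y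

/-- Translation of coordinates: the automorphism `v ↦ (x ↦ v (x * q))`
of the group `Q → N`. -/
def transAut {Q N : Type*} [Group Q] [Group N] (q : Q) : (Q → N) ≃* (Q → N) where
  toFun v := fun x => v (x * q)
  invFun v := fun x => v (x * q⁻¹)
  left_inv v := funext fun x => by simp [mul_assoc]
  right_inv v := funext fun x => by simp [mul_assoc]
  map_mul' v w := rfl

/-- The action of `Q` on `Q → N` by translating coordinates, as a homomorphism
`Q →* MulAut (Q → N)`. -/
def transHom (Q N : Type*) [Group Q] [Group N] : Q →* MulAut (Q → N) where
  toFun := transAut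
  map_one' := by
    ext v x
    simp [transAut]
  map_mul' q₁ q₂ := by
    ext v x
    simp [transAut, mul_assoc, MulAut.mul_apply]

/-- The wreath product `Q ≀ N` of two groups: the semidirect product
`N^Q ⋊ Q`, with `Q` acting on `N^Q` by translating the coordinates. -/
abbrev WreathProd (Q N : Type*) [Group Q] [Group N] :=
  SemidirectProduct (Q → N) Q (transHom Q N)


/-! ### Auxiliary lemmas for Statement 11 -/

section Statement11Aux

variable {G' : Type*} [Group G']

lemma mem_regularRep_iff {σ : Equiv.Perm G'} :
    σ ∈ regularRep G' ↔ ∃ g : G', ∀ x, σ x = x * g :=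
  Iff.rfl

lemma mem_normalizer_regularRep_iff {σ : Equiv.Perm G'} :
    σ ∈ Subgroup.normalizer (regularRep G') ↔ ∀ g : G', ∃ h : G', ∀ x, σ (x * g) = σ x * h := by
  rw [Subgroup.mem_normalizer_iff]
  constructor
  · intro H g
    have hρ : (Equiv.mulRight g) ∈ regularRep G' := ⟨g, fun x => rfl⟩
    obtain ⟨h, hh⟩ := (H _).mp hρ
    refine ⟨h, fun x => ?_⟩
    have := hh (σ x)
    simpa using this
  · intro H τ
    constructor
    · rintro ⟨k, hk⟩
      obtain ⟨h, hh⟩ := H k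
      refine ⟨h, fun y => ?_⟩
      simp only [Equiv.Perm.mul_apply]
      rw [hk, hh, Equiv.Perm.inv_def, Equiv.apply_symm_apply]
    · rintro ⟨k, hk⟩
      set g := σ⁻¹ (σ 1 * k) with hg
      obtain ⟨h, hh⟩ := H g
      have hσg : σ g = σ 1 * k := by rw [hg, Equiv.Perm.inv_def, Equiv.apply_symm_apply]
      have hh1 := hh 1
      rw [one_mul, hσg] at hh1
      have hhk : h = k := mul_left_cancel hh1.symm
      refine ⟨g, fun x => ?_⟩
      apply σ.injective
      have := hk (σ x)
      simp only [Equiv.Perm.mul_apply] at this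
      rw [Equiv.Perm.inv_def, Equiv.symm_apply_apply] at this
      rw [this, hh x, hhk]

/-- Conjugates of elements of `N` central in `N` are again in `N` and central in `N`. -/
lemma central_conj {N : Subgroup G'} [N.Normal] {z : G'} (hzN : z ∈ N)
    (hz : ∀ n ∈ N, z * n = n * z) (x : G') :
    x⁻¹ * z * x ∈ N ∧ ∀ n ∈ N, (x⁻¹ * z * x) * n = n * (x⁻¹ * z * x) := by
  constructor
  · simpa using ‹N.Normal›.conj_mem z hzN x⁻¹
  · intro n hn
    have hn' : x * n * x⁻¹ ∈ N := ‹N.Normal›.conj_mem n hn x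
    have h2 := hz _ hn'
    calc x⁻¹ * z * x * n = x⁻¹ * (z * (x * n * x⁻¹)) * x := by group
      _ = x⁻¹ * ((x * n * x⁻¹) * z) * x := by rw [h2]
      _ = n * (x⁻¹ * z * x) := by group

/-- The permutation `x ↦ x * F x` for `F` constant on cosets of `N`, with values in `N`. -/
def cosetMulPerm (F : G' → G') {N : Subgroup G'} (hFN : ∀ x, F x ∈ N)
    (hFcos : ∀ x n, n ∈ N → F (x * n) = F x) : Equiv.Perm G' where
  toFun := fun x => x * F x
  invFun := fun x => x * (F x)⁻¹
  left_inv := fun x => by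
    show x * F x * (F (x * F x))⁻¹ = x
    rw [hFcos x (F x) (hFN x)]; group
  right_inv := fun x => by
    show x * (F x)⁻¹ * F (x * (F x)⁻¹) = x
    rw [hFcos x (F x)⁻¹ (inv_mem (hFN x))]; group

lemma cosetMulPerm_apply (F : G' → G') {N : Subgroup G'} (hFN : ∀ x, F x ∈ N)
    (hFcos : ∀ x n, n ∈ N → F (x * n) = F x) (x : G') :
    cosetMulPerm F hFN hFcos x = x * F x := rfl

lemma cosetMulPerm_mem_Wset (F : G' → G') {N : Subgroup G'} [N.Normal] (hFN : ∀ x, F x ∈ N)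
    (hFcos : ∀ x n, n ∈ N → F (x * n) = F x) :
    cosetMulPerm F hFN hFcos ∈ Wset G' N := by
  refine ⟨1, fun q => F q.out, fun q => hFN _, fun x => ?_⟩
  have h1 : x⁻¹ * (QuotientGroup.mk x : G' ⧸ N).out ∈ N :=
    QuotientGroup.eq.mp (QuotientGroup.out_eq' (QuotientGroup.mk x)).symm
  have h2 : (QuotientGroup.mk x : G' ⧸ N).out
      = x * (x⁻¹ * (QuotientGroup.mk x : G' ⧸ N).out) := by group
  show x * F x = x * 1 * F _
  rw [mul_one, h2, hFcos x _ h1]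

lemma caseA_key (x g z : G')
    (hA : (g * z⁻¹ * g⁻¹) * (x⁻¹ * z * x) = (x⁻¹ * z * x) * (g * z⁻¹ * g⁻¹))
    (hB : z * (x⁻¹ * z * x) = (x⁻¹ * z * x) * z) :
    (x * g) * (z⁻¹ * ((x * g)⁻¹ * z * (x * g))) =
      (x * (z⁻¹ * (x⁻¹ * z * x))) * (z * g * z⁻¹) := by
  have e1 : (x * g) * (z⁻¹ * ((x * g)⁻¹ * z * (x * g))) =
      x * ((g * z⁻¹ * g⁻¹) * (x⁻¹ * z * x)) * g := by group
  rw [e1, hA]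
  have e2 : (x * (z⁻¹ * (x⁻¹ * z * x))) * (z * g * z⁻¹) =
      x * z⁻¹ * ((x⁻¹ * z * x) * z) * g * z⁻¹ := by group
  rw [e2, ← hB]
  group

/-- Auxiliary: package the `ZMod p`-module structure non-reducibly. -/
def zmodModuleAux (p : ℕ) (M : Type*) [AddCommGroup M] (h : ∀ x : M, p • x = 0) :
    Module (ZMod p) M :=
  AddCommGroup.zmodModule h

lemma exists_hom_to_zmod {A : Type*} [CommGroup A] [Finite A] (p : ℕ) (hp : p.Prime)
    (hdvd : p ∣ Nat.card A) :
    ∃ (χ : A →* Multiplicative (ZMod p)) (a : A), χ a ≠ 1 := by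
  haveI : Fact p.Prime := ⟨hp⟩
  obtain ⟨a₀, ha₀⟩ := exists_prime_orderOf_dvd_card' p hdvd
  set R : Subgroup A := (powMonoidHom p : A →* A).range with hR
  have hBne : ∃ b : A ⧸ R, b ≠ 1 := by
    by_contra hall
    push_neg at hall
    have hsurj : Function.Surjective (fun x : A => x ^ p) := by
      intro t
      have ht : (QuotientGroup.mk t : A ⧸ R) = 1 := hall _
      rw [QuotientGroup.eq_one_iff] at ht
      obtain ⟨y, hy⟩ := ht
      exact ⟨y, hy⟩
    have hinj := Finite.injective_iff_surjective.mpr hsurj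
    have h1 : a₀ = 1 := hinj (by simp only [← ha₀, pow_orderOf_eq_one, one_pow])
    rw [h1, orderOf_one] at ha₀
    exact hp.one_lt.ne' ha₀.symm
  obtain ⟨b, hb⟩ := hBne
  letI : Module (ZMod p) (Additive (A ⧸ R)) := zmodModuleAux p _ (by
    intro x
    obtain ⟨a, ha⟩ := QuotientGroup.mk_surjective x.toMul
    have hxa : Additive.ofMul (QuotientGroup.mk a : A ⧸ R) = x := by
      rw [ha]; rfl
    have h1 : ((QuotientGroup.mk a : A ⧸ R)) ^ p = 1 := by
      have h2 : ((QuotientGroup.mk (a ^ p) : A ⧸ R)) = ((QuotientGroup.mk a : A ⧸ R)) ^ p :=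
        (QuotientGroup.mk' R).map_pow a p
      rw [← h2]
      exact (QuotientGroup.eq_one_iff _).mpr ⟨a, rfl⟩
    rw [← hxa, ← ofMul_pow, h1, ofMul_one])
  have hbv : Additive.ofMul b ≠ (0 : Additive (A ⧸ R)) := by simpa using hb
  have hexφ : ∃ φ : Additive (A ⧸ R) →ₗ[ZMod p] ZMod p, φ (Additive.ofMul b) ≠ 0 := by
    by_contra hall
    push_neg at hall
    exact hbv ((Module.forall_dual_apply_eq_zero_iff (ZMod p) _).mp hall)
  obtain ⟨φ, hφ⟩ := hexφ
  refine ⟨{ toFun := fun a => Multiplicative.ofAdd (φ (Additive.ofMul (QuotientGroup.mk a : A ⧸ R))),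
            map_one' := ?_, map_mul' := ?_ }, ?_⟩
  · simp
  · intro a b
    simp [← ofAdd_add, ← map_add]
  · obtain ⟨a₁, ha₁⟩ := QuotientGroup.mk_surjective b
    refine ⟨a₁, ?_⟩
    show Multiplicative.ofAdd (φ (Additive.ofMul (QuotientGroup.mk a₁ : A ⧸ R))) ≠ 1
    rw [ha₁]
    simpa using hφ

end Statement11Aux

/-- The right regular representation `Ĝ` equals its own normalizer in
`W(G,N)` iff `Z(N) ≤ Z(G)` and the order of the abelianization of `G/N` is relatively
prime to `|Z(N)|`. -/
theorem regularRep_selfNormalizing_in_Wset_iff {G : Type*} [Group G] [Fintype G]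
    (N : Subgroup G) [N.Normal] :
    ({σ : Equiv.Perm G | σ ∈ Wset G N ∧ σ ∈ Subgroup.normalizer (regularRep G)} =
        (↑(regularRep G) : Set (Equiv.Perm G))) ↔
      ((∀ n : ↥N, n ∈ Subgroup.center ↥N → (n : G) ∈ Subgroup.center G) ∧
        Nat.Coprime (Nat.card (Abelianization (G ⧸ N)))
          (Nat.card ↥(Subgroup.center ↥N))) := by
  constructor
  · -- equality implies the two conditions
    intro h
    have hc1 : ∀ n : ↥N, n ∈ Subgroup.center ↥N → (n : G) ∈ Subgroup.center G := by
      intro n hnc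
      by_contra hng
      obtain ⟨g₀, hg₀⟩ := not_forall.mp (fun hall => hng (Subgroup.mem_center_iff.mpr hall))
      set z : G := (n : G) with hzdef
      have hzN : z ∈ N := n.2
      have hzc : ∀ m ∈ N, z * m = m * z := fun m hm =>
        (congrArg Subtype.val (Subgroup.mem_center_iff.mp hnc ⟨m, hm⟩)).symm
      set F : G → G := fun x => z⁻¹ * (x⁻¹ * z * x) with hF
      have hFN : ∀ x, F x ∈ N := fun x => mul_mem (inv_mem hzN) (central_conj hzN hzc x).1
      have hFcos : ∀ x m, m ∈ N → F (x * m) = F x := by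
        intro x m hm
        have hc := (central_conj hzN hzc x).2 m hm
        show z⁻¹ * ((x * m)⁻¹ * z * (x * m)) = z⁻¹ * (x⁻¹ * z * x)
        have he : (x * m)⁻¹ * z * (x * m) = m⁻¹ * ((x⁻¹ * z * x) * m) := by group
        rw [he, hc]
        group
      set σ := cosetMulPerm F hFN hFcos with hσ
      have hW : σ ∈ Wset G N := cosetMulPerm_mem_Wset F hFN hFcos
      have hnorm : σ ∈ Subgroup.normalizer (regularRep G) := by
        rw [mem_normalizer_regularRep_iff]
        intro g
        refine ⟨z * g * z⁻¹, fun x => ?_⟩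
        have hzc' : ∀ m ∈ N, z⁻¹ * m = m * z⁻¹ := fun m hm =>
          (Commute.inv_left (hzc m hm : Commute z m)).eq
        have hAmem := central_conj (inv_mem hzN) hzc' g⁻¹
        have hA : (g * z⁻¹ * g⁻¹) * (x⁻¹ * z * x) = (x⁻¹ * z * x) * (g * z⁻¹ * g⁻¹) := by
          have := hAmem.2 _ (central_conj hzN hzc x).1
          simpa [inv_inv] using this
        have hB : z * (x⁻¹ * z * x) = (x⁻¹ * z * x) * z := hzc _ (central_conj hzN hzc x).1
        show (x * g) * F (x * g) = (x * F x) * (z * g * z⁻¹)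
        exact caseA_key x g z hA hB
      have hmem : σ ∈ (↑(regularRep G) : Set (Equiv.Perm G)) := h ▸ ⟨hW, hnorm⟩
      obtain ⟨kk, hkk⟩ := hmem
      have hF1 : F 1 = 1 := by simp [hF]
      have hk1 : kk = 1 := by
        have h1 := hkk 1
        rw [one_mul] at h1
        rw [← h1]
        show (1 : G) * F 1 = 1
        rw [hF1, mul_one]
      have h2 := hkk g₀
      rw [hk1, mul_one] at h2
      have h3 : g₀ * F g₀ = g₀ := h2
      have h4 : F g₀ = 1 := by
        have := congrArg (fun t => g₀⁻¹ * t) h3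
        simpa using this
      have h5 : g₀⁻¹ * z * g₀ = z := by
        have hz1 : z⁻¹ * (g₀⁻¹ * z * g₀) = 1 := h4
        calc g₀⁻¹ * z * g₀ = z * (z⁻¹ * (g₀⁻¹ * z * g₀)) := by group
          _ = z := by rw [hz1, mul_one]
      have h6 : z * g₀ = g₀ * z := by
        calc z * g₀ = g₀ * (g₀⁻¹ * z * g₀) := by group
          _ = g₀ * z := by rw [h5]
      exact hg₀ h6.symm
    refine ⟨hc1, ?_⟩
    by_contra hnc
    obtain ⟨p, hp, hpk, hpm⟩ := Nat.Prime.not_coprime_iff_dvd.mp hnc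
    haveI : Fact p.Prime := ⟨hp⟩
    haveI : NeZero p := ⟨hp.ne_zero⟩
    obtain ⟨χ, a, hχa⟩ := exists_hom_to_zmod (A := Abelianization (G ⧸ N)) p hp hpk
    obtain ⟨ζ, hζ⟩ := exists_prime_orderOf_dvd_card' (G := ↥(Subgroup.center ↥N)) p hpm
    set z : G := ((ζ : ↥N) : G) with hzdef
    have hzN : z ∈ N := (ζ : ↥N).2
    have hzc : ∀ m ∈ N, z * m = m * z := fun m hm =>
      (congrArg Subtype.val (Subgroup.mem_center_iff.mp ζ.2 ⟨m, hm⟩)).symm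
    have hordz : orderOf z = p := by
      have e1 : orderOf ((ζ : ↥N) : G) = orderOf (ζ : ↥N) :=
        orderOf_injective N.subtype N.subtype_injective (ζ : ↥N)
      have e2 : orderOf ((ζ : ↥N)) = orderOf ζ :=
        orderOf_injective (Subgroup.center ↥N).subtype (Subgroup.center ↥N).subtype_injective ζ
      rw [hzdef, e1, e2, hζ]
    have hzZG : z ∈ Subgroup.center G := by
      refine hc1 (ζ : ↥N) ?_
      exact ζ.2
    set ψ : Multiplicative (ZMod p) →* G :=
      { toFun := fun t => z ^ (Multiplicative.toAdd t).val
        map_one' := by simp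
        map_mul' := by
          intro s t
          have hmod : ∀ n : ℕ, z ^ (n % p) = z ^ n := by
            intro n
            rw [← hordz, pow_mod_orderOf]
          show z ^ (Multiplicative.toAdd (s * t)).val = _
          rw [toAdd_mul, ZMod.val_add, hmod, pow_add] } with hψ
    set φ : (G ⧸ N) →* G := ψ.comp (χ.comp Abelianization.of) with hφ
    have hφpow : ∀ q, ∃ j : ℕ, φ q = z ^ j := fun q => ⟨_, rfl⟩
    have hφN : ∀ q, φ q ∈ N := by
      intro q
      obtain ⟨j, hj⟩ := hφpow q
      rw [hj]
      exact pow_mem hzN j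
    have hφZ : ∀ q, φ q ∈ Subgroup.center G := by
      intro q
      obtain ⟨j, hj⟩ := hφpow q
      rw [hj]
      exact pow_mem hzZG j
    obtain ⟨q₀, hq₀⟩ := QuotientGroup.mk_surjective a
    have hφq₀ : φ q₀ ≠ 1 := by
      intro hcon
      have hφa : ψ (χ a) = 1 := by
        rw [← hq₀]
        exact hcon
      have hzt : z ^ (Multiplicative.toAdd (χ a)).val = 1 := hφa
      have hdvd := orderOf_dvd_of_pow_eq_one hzt
      rw [hordz] at hdvd
      have hlt : (Multiplicative.toAdd (χ a)).val < p := ZMod.val_lt _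
      have hv0 : (Multiplicative.toAdd (χ a)).val = 0 := Nat.eq_zero_of_dvd_of_lt hdvd hlt
      have ht0 : Multiplicative.toAdd (χ a) = 0 := by
        rwa [ZMod.val_eq_zero] at hv0
      apply hχa
      have := congrArg Multiplicative.ofAdd ht0
      simpa using this
    set F : G → G := fun x => φ (QuotientGroup.mk x) with hF
    have hFN : ∀ x, F x ∈ N := fun x => hφN _
    have hFcos : ∀ x m, m ∈ N → F (x * m) = F x := by
      intro x m hm
      show φ (QuotientGroup.mk (x * m)) = φ (QuotientGroup.mk x)
      rw [QuotientGroup.mk_mul, (QuotientGroup.eq_one_iff m).mpr hm, mul_one]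
    set σ := cosetMulPerm F hFN hFcos with hσ
    have hW : σ ∈ Wset G N := cosetMulPerm_mem_Wset F hFN hFcos
    have hnorm : σ ∈ Subgroup.normalizer (regularRep G) := by
      rw [mem_normalizer_regularRep_iff]
      intro g
      refine ⟨g * F g, fun x => ?_⟩
      have hFxg : F (x * g) = F x * F g := by
        show φ (QuotientGroup.mk (x * g)) = φ (QuotientGroup.mk x) * φ (QuotientGroup.mk g)
        rw [QuotientGroup.mk_mul, map_mul]
      have hcomm : g * F x = F x * g := Subgroup.mem_center_iff.mp (hφZ _) g
      show (x * g) * F (x * g) = (x * F x) * (g * F g)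
      rw [hFxg]
      calc x * g * (F x * F g) = x * (g * F x) * F g := by group
        _ = x * (F x * g) * F g := by rw [hcomm]
        _ = (x * F x) * (g * F g) := by group
    have hmem : σ ∈ (↑(regularRep G) : Set (Equiv.Perm G)) := h ▸ ⟨hW, hnorm⟩
    obtain ⟨kk, hkk⟩ := hmem
    have hF1 : F 1 = 1 := by
      show φ (QuotientGroup.mk (1 : G)) = 1
      rw [QuotientGroup.mk_one, map_one]
    have hk1 : kk = 1 := by
      have h1 := hkk 1
      rw [one_mul] at h1
      rw [← h1]
      show (1 : G) * F 1 = 1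
      rw [hF1, mul_one]
    obtain ⟨x₀, hx₀⟩ := QuotientGroup.mk_surjective q₀
    have h2 := hkk x₀
    rw [hk1, mul_one] at h2
    have h3 : x₀ * F x₀ = x₀ := h2
    have h4 : F x₀ = 1 := by
      have := congrArg (fun t => x₀⁻¹ * t) h3
      simpa using this
    apply hφq₀
    rw [← hx₀]
    exact h4
  · -- the two conditions imply the equality
    rintro ⟨hcen, hcop⟩
    apply Set.eq_of_subset_of_subset
    · rintro σ ⟨⟨c, f, hfN, hσf⟩, hnorm⟩
      rw [mem_normalizer_regularRep_iff] at hnorm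
      have key : ∀ g x : G, σ (x * g) = σ x * ((σ 1)⁻¹ * σ g) := by
        intro g x
        obtain ⟨h', hh⟩ := hnorm g
        have h1 := hh 1
        rw [one_mul] at h1
        rw [hh x, h1]
        group
      set u : G → G := fun x => f (QuotientGroup.mk x) * (f 1)⁻¹ with hu
      have master : ∀ g x : G, u (x * g) = (c⁻¹ * g * c)⁻¹ * u x * (c⁻¹ * g * c) * u g := by
        intro g x
        have e := key g x
        simp only [hσf, QuotientGroup.mk_one, one_mul] at e
        have hFxg : f (QuotientGroup.mk (x * g)) =
            (x * g * c)⁻¹ * (x * c * f (QuotientGroup.mk x) *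
              ((c * f 1)⁻¹ * (g * c * f (QuotientGroup.mk g)))) := by
          rw [← e]; group
        simp only [hu]
        rw [hFxg]
        group
      have huN : ∀ x, u x ∈ N := fun x => mul_mem (hfN _) (inv_mem (hfN _))
      have hker : ∀ n ∈ N, u n = 1 := by
        intro n hn
        simp only [hu]
        rw [(QuotientGroup.eq_one_iff n).mpr hn]
        simp
      have hucen : ∀ x, ∀ n ∈ N, u x * n = n * u x := by
        intro x n hn
        have hn' : c * n * c⁻¹ ∈ N := ‹N.Normal›.conj_mem n hn c
        have hm := master (c * n * c⁻¹) x
        have h1 : (QuotientGroup.mk (x * (c * n * c⁻¹)) : G ⧸ N) = QuotientGroup.mk x := by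
          rw [QuotientGroup.mk_mul, (QuotientGroup.eq_one_iff _).mpr hn', mul_one]
        have h2 : u (x * (c * n * c⁻¹)) = u x := by simp only [hu]; rw [h1]
        have h3 : u (c * n * c⁻¹) = 1 := hker _ hn'
        rw [h2, h3, mul_one] at hm
        have h4 : c⁻¹ * (c * n * c⁻¹) * c = n := by group
        rw [h4] at hm
        calc u x * n = n * (n⁻¹ * u x * n) := by group
          _ = n * u x := by rw [← hm]
      have huZ : ∀ x, u x ∈ Subgroup.center G := by
        intro x
        refine hcen ⟨u x, huN x⟩ (Subgroup.mem_center_iff.mpr fun m => ?_)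
        exact Subtype.ext ((hucen x m.1 m.2).symm)
      have hmul : ∀ x y : G, u (x * y) = u x * u y := by
        intro x y
        have hm := master y x
        have hcomm := Subgroup.mem_center_iff.mp (huZ x)
        rw [hm]
        calc (c⁻¹ * y * c)⁻¹ * u x * (c⁻¹ * y * c) * u y
            = (c⁻¹ * y * c)⁻¹ * (u x * (c⁻¹ * y * c)) * u y := by group
          _ = (c⁻¹ * y * c)⁻¹ * ((c⁻¹ * y * c) * u x) * u y := by rw [← hcomm (c⁻¹ * y * c)]
          _ = u x * u y := by group
      set U : G →* G := MonoidHom.mk' u hmul with hU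
      have hUker : N ≤ U.ker := fun n hn => MonoidHom.mem_ker.mpr (hker n hn)
      set ubar := QuotientGroup.lift N U hUker with hubar
      have hlift : ∀ x : G, ubar (QuotientGroup.mk x) = u x := fun x => rfl
      have hubarZ : ∀ q, ubar q ∈ Subgroup.center G := by
        intro q
        obtain ⟨x, rfl⟩ := QuotientGroup.mk_surjective q
        rw [hlift]
        exact huZ x
      have hcommlift : commutator (G ⧸ N) ≤ ubar.ker := by
        rw [commutator_def, Subgroup.commutator_le]
        intro g1 _ g2 _
        rw [MonoidHom.mem_ker, map_commutatorElement]
        exact commutatorElement_eq_one_iff_commute.mpr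
          (Subgroup.mem_center_iff.mp (hubarZ g2) (ubar g1))
      have hone : ∀ x : G, u x = 1 := by
        intro x
        have hpk : (u x) ^ Nat.card (Abelianization (G ⧸ N)) = 1 := by
          have h1 : (Abelianization.of (QuotientGroup.mk x : G ⧸ N))
              ^ Nat.card (Abelianization (G ⧸ N)) = 1 := pow_card_eq_one'
          rw [← map_pow] at h1
          have h2 : ((QuotientGroup.mk x : G ⧸ N)) ^ Nat.card (Abelianization (G ⧸ N))
              ∈ commutator (G ⧸ N) := (QuotientGroup.eq_one_iff _).mp h1
          have h3 := hcommlift h2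
          rw [MonoidHom.mem_ker, map_pow, hlift] at h3
          exact h3
        have hpm : (u x) ^ Nat.card ↥(Subgroup.center ↥N) = 1 := by
          set w : ↥(Subgroup.center ↥N) :=
            ⟨⟨u x, huN x⟩, Subgroup.mem_center_iff.mpr fun g =>
              Subtype.ext ((hucen x g.1 g.2).symm)⟩ with hw
          have hwp : w ^ Nat.card ↥(Subgroup.center ↥N) = 1 := pow_card_eq_one'
          have hcoe : ((((w ^ Nat.card ↥(Subgroup.center ↥N) : ↥(Subgroup.center ↥N)) : ↥N) : G))
              = (u x) ^ Nat.card ↥(Subgroup.center ↥N) := by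
            push_cast
            rfl
          rw [hwp] at hcoe
          simpa using hcoe.symm
        have hd1 := orderOf_dvd_of_pow_eq_one hpk
        have hd2 := orderOf_dvd_of_pow_eq_one hpm
        have hdg := Nat.dvd_gcd hd1 hd2
        rw [Nat.coprime_iff_gcd_eq_one.mp hcop] at hdg
        exact orderOf_eq_one_iff.mp (Nat.dvd_one.mp hdg)
      refine mem_regularRep_iff.mpr ⟨c * f 1, fun x => ?_⟩
      have hfx : f (QuotientGroup.mk x) = f 1 := by
        have h0 := hone x
        simp only [hu] at h0
        exact mul_inv_eq_one.mp h0
      rw [hσf x, hfx, mul_assoc]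
    · rintro σ hσm
      obtain ⟨g, hg⟩ := (hσm : σ ∈ regularRep G)
      refine ⟨⟨g, fun _ => (1 : G), fun q => N.one_mem, fun x => ?_⟩,
        Subgroup.le_normalizer (⟨g, hg⟩ : σ ∈ regularRep G)⟩
      simp [hg x]
end

section
/- Let N be a normal subgroup of a finite group G with Z(N) ≤ Z(G), let Ĝ be the right regular representation of G, and let Z¹(G/N, Z(N)) be the set of maps f : G/N → Z(N) satisfying f(ḡ·h̄) = (f(ḡ))^{h̄} · f(h̄) for all ḡ, h̄ ∈ G/N, where the action of G/N on Z(N) is induced by conjugation in G. Then the normalizer of Ĝ in W(G,N) equals {φ_{c,f} : c ∈ G, f ∈ Z¹(G/N, Z(N))}. -/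
/-! Common definitions: Cayley digraphs, digraph automorphism groups,
DRRs/GRRs, detecting groups, the regular representation, the group `W(G,N)`,
wreath and cartesian products of digraphs, and the wreath product of groups. -/

universe u

lemma aux_conj_centralizer {G : Type*} [Group G] {N : Subgroup G} {a b : G} (hb : b ∈ N)
    (h : ∀ m ∈ N, m * a = a * m) : ∀ m ∈ N, m * (b⁻¹ * a * b) = (b⁻¹ * a * b) * m := by
  intro m hm
  have hm' : b * m * b⁻¹ ∈ N := N.mul_mem (N.mul_mem hb hm) (N.inv_mem hb)
  calc m * (b⁻¹ * a * b) = b⁻¹ * ((b * m * b⁻¹) * a) * b := by group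
    _ = b⁻¹ * (a * (b * m * b⁻¹)) * b := by rw [h _ hm']
    _ = (b⁻¹ * a * b) * m := by group
/-- If `Z(N) ≤ Z(G)`, the normalizer of `Ĝ` in `W(G,N)` is exactly
`{φ_{c,f} : c ∈ G, f ∈ Z¹(G/N, Z(N))}`, where `Z¹(G/N, Z(N))` is the set of crossed
homomorphisms (`1`-cocycles) `f : G/N → Z(N)` for the conjugation action. -/
theorem normalizer_regularRep_in_Wset_eq_cocycles {G : Type*} [Group G] [Fintype G]
    (N : Subgroup G) [N.Normal]
    (hZ : ∀ n : ↥N, n ∈ Subgroup.center ↥N → (n : G) ∈ Subgroup.center G) :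
    {σ : Equiv.Perm G | σ ∈ Wset G N ∧ σ ∈ Subgroup.normalizer (regularRep G)} =
      {σ : Equiv.Perm G | ∃ (c : G) (f : G ⧸ N → G),
        (∀ q, f q ∈ N) ∧
        (∀ q, ∀ m ∈ N, f q * m = m * f q) ∧
        (∀ g h : G, f (QuotientGroup.mk (g * h)) =
            h⁻¹ * f (QuotientGroup.mk g) * h * f (QuotientGroup.mk h)) ∧
        ∀ x : G, σ x = x * c * f (QuotientGroup.mk x)} := by
  ext σ
  simp only [Set.mem_setOf_eq]
  constructor
  · rintro ⟨⟨c, f, hfN, hσ⟩, hnorm⟩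
    rw [Subgroup.mem_normalizer_iff] at hnorm
    -- key: conjugating a right translation gives a right translation
    have key : ∀ g : G, ∃ h : G, ∀ y : G, σ (y * g) = σ y * h := by
      intro g
      have hg : Equiv.mulRight g ∈ regularRep G := ⟨g, fun x => rfl⟩
      obtain ⟨h, hh⟩ := (hnorm (Equiv.mulRight g)).mp hg
      refine ⟨h, fun y => ?_⟩
      have h2 := hh (σ y)
      simpa only [Equiv.Perm.mul_apply, Equiv.Perm.coe_inv, Equiv.symm_apply_apply,
        Equiv.coe_mulRight] using h2
    -- master equation
    have M : ∀ g y : G, g * c * f (QuotientGroup.mk (y * g)) =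
        c * f (QuotientGroup.mk y) * (f (1 : G ⧸ N))⁻¹ * c⁻¹ *
          (g * c * f (QuotientGroup.mk g)) := by
      intro g y
      obtain ⟨h, hh⟩ := key g
      have h1 := hh 1
      have hy := hh y
      rw [hσ, hσ] at h1 hy
      simp only [one_mul, QuotientGroup.mk_one] at h1
      -- h1 : g * c * f (mk g) = c * f 1 * h
      have hsolve : h = (f (1 : G ⧸ N))⁻¹ * c⁻¹ * (g * c * f (QuotientGroup.mk g)) := by
        rw [h1]; group
      rw [hsolve] at hy
      calc g * c * f (QuotientGroup.mk (y * g))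
          = y⁻¹ * (y * g * c * f (QuotientGroup.mk (y * g))) := by group
        _ = y⁻¹ * (y * c * f (QuotientGroup.mk y) *
              ((f (1 : G ⧸ N))⁻¹ * c⁻¹ * (g * c * f (QuotientGroup.mk g)))) := by rw [hy]
        _ = c * f (QuotientGroup.mk y) * (f (1 : G ⧸ N))⁻¹ * c⁻¹ *
              (g * c * f (QuotientGroup.mk g)) := by group
    -- centralizing property of f(y) * f(1)⁻¹
    have commN : ∀ y : G, ∀ m ∈ N,
        m * (f (QuotientGroup.mk y) * (f (1 : G ⧸ N))⁻¹) =
          (f (QuotientGroup.mk y) * (f (1 : G ⧸ N))⁻¹) * m := by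
      intro y m hm
      have hn : c * m * c⁻¹ ∈ N := Subgroup.Normal.conj_mem ‹N.Normal› m hm c
      have hmk : QuotientGroup.mk (y * (c * m * c⁻¹)) = (QuotientGroup.mk y : G ⧸ N) := by
        rw [QuotientGroup.mk_mul, (QuotientGroup.eq_one_iff _).mpr hn, mul_one]
      have hmk2 : (QuotientGroup.mk (c * m * c⁻¹) : G ⧸ N) = 1 :=
        (QuotientGroup.eq_one_iff _).mpr hn
      have hM := M (c * m * c⁻¹) y
      rw [hmk, hmk2] at hM
      calc m * (f (QuotientGroup.mk y) * (f (1 : G ⧸ N))⁻¹)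
          = c⁻¹ * ((c * m * c⁻¹) * c * f (QuotientGroup.mk y)) * (f (1 : G ⧸ N))⁻¹ := by
            group
        _ = c⁻¹ * (c * f (QuotientGroup.mk y) * (f (1 : G ⧸ N))⁻¹ * c⁻¹ *
              ((c * m * c⁻¹) * c * f (1 : G ⧸ N))) * (f (1 : G ⧸ N))⁻¹ := by rw [hM]
        _ = (f (QuotientGroup.mk y) * (f (1 : G ⧸ N))⁻¹) * m := by group
    set f1 : G := f (1 : G ⧸ N) with hf1
    set f' : G ⧸ N → G := fun q => f1⁻¹ * f q with hf'
    have hfN' : ∀ q, f' q ∈ N := fun q => N.mul_mem (N.inv_mem (hfN _)) (hfN q)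
    have hcomm' : ∀ q, ∀ m ∈ N, f' q * m = m * f' q := by
      intro q m hm
      obtain ⟨y, rfl⟩ := QuotientGroup.mk_surjective q
      have h2 := aux_conj_centralizer (N := N) (hfN (1 : G ⧸ N)) (commN y) m hm
      calc f' (QuotientGroup.mk y) * m
          = (f1⁻¹ * (f (QuotientGroup.mk y) * f1⁻¹) * f1) * m := by
            simp only [hf']; group
        _ = m * (f1⁻¹ * (f (QuotientGroup.mk y) * f1⁻¹) * f1) := h2.symm
        _ = m * f' (QuotientGroup.mk y) := by simp only [hf']; group
    have hcenter : ∀ q, f' q ∈ Subgroup.center G := by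
      intro q
      refine hZ ⟨f' q, hfN' q⟩ ?_
      rw [Subgroup.mem_center_iff]
      intro m
      exact Subtype.ext ((hcomm' q m.1 m.2).symm)
    have hcen : ∀ q (x : G), x * f' q = f' q * x :=
      fun q x => Subgroup.mem_center_iff.mp (hcenter q) x
    have hz : ∀ g : G, f (QuotientGroup.mk g) * f1⁻¹ = f' (QuotientGroup.mk g) := by
      intro g
      have h1 := hcen (QuotientGroup.mk g) f1
      calc f (QuotientGroup.mk g) * f1⁻¹
          = f1 * (f1⁻¹ * f (QuotientGroup.mk g)) * f1⁻¹ := by group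
        _ = f1 * f' (QuotientGroup.mk g) * f1⁻¹ := by rw [hf']
        _ = f' (QuotientGroup.mk g) * f1 * f1⁻¹ := by rw [h1]
        _ = f' (QuotientGroup.mk g) := by group
    -- multiplicativity of f'
    have hom' : ∀ g h : G, f' (QuotientGroup.mk (g * h)) =
        f' (QuotientGroup.mk g) * f' (QuotientGroup.mk h) := by
      intro g h
      have step : c * f (QuotientGroup.mk g) * f1⁻¹ * c⁻¹ = f' (QuotientGroup.mk g) := by
        have h1 := hcen (QuotientGroup.mk g) c
        calc c * f (QuotientGroup.mk g) * f1⁻¹ * c⁻¹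
            = c * (f (QuotientGroup.mk g) * f1⁻¹) * c⁻¹ := by group
          _ = c * f' (QuotientGroup.mk g) * c⁻¹ := by rw [hz]
          _ = f' (QuotientGroup.mk g) * c * c⁻¹ := by rw [h1]
          _ = f' (QuotientGroup.mk g) := by group
      have hM := M h g
      rw [step] at hM
      -- hM : h * c * f (mk (g*h)) = f' (mk g) * (h * c * f (mk h))
      have hcomm_hc := hcen (QuotientGroup.mk g) (h * c)
      have hF : f (QuotientGroup.mk (g * h)) =
          f' (QuotientGroup.mk g) * f (QuotientGroup.mk h) := by
        calc f (QuotientGroup.mk (g * h))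
            = (h * c)⁻¹ * (h * c * f (QuotientGroup.mk (g * h))) := by group
          _ = (h * c)⁻¹ * (f' (QuotientGroup.mk g) * (h * c * f (QuotientGroup.mk h))) := by
              rw [hM]
          _ = (h * c)⁻¹ * (f' (QuotientGroup.mk g) * (h * c) * f (QuotientGroup.mk h)) := by
              group
          _ = (h * c)⁻¹ * ((h * c) * f' (QuotientGroup.mk g) * f (QuotientGroup.mk h)) := by
              rw [← hcomm_hc]
          _ = f' (QuotientGroup.mk g) * f (QuotientGroup.mk h) := by group
      have h1 := hcen (QuotientGroup.mk g) f1⁻¹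
      calc f' (QuotientGroup.mk (g * h)) = f1⁻¹ * f (QuotientGroup.mk (g * h)) := by rw [hf']
        _ = f1⁻¹ * (f' (QuotientGroup.mk g) * f (QuotientGroup.mk h)) := by rw [hF]
        _ = (f1⁻¹ * f' (QuotientGroup.mk g)) * f (QuotientGroup.mk h) := by group
        _ = (f' (QuotientGroup.mk g) * f1⁻¹) * f (QuotientGroup.mk h) := by rw [h1]
        _ = f' (QuotientGroup.mk g) * f' (QuotientGroup.mk h) := by rw [hf']; group
    refine ⟨c * f1, f', hfN', ?_, ?_, ?_⟩
    · intro q m hm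
      exact hcomm' q m hm
    · intro g h
      have h1 := hcen (QuotientGroup.mk g) h
      rw [hom' g h]
      calc f' (QuotientGroup.mk g) * f' (QuotientGroup.mk h)
          = h⁻¹ * (h * f' (QuotientGroup.mk g)) * f' (QuotientGroup.mk h) := by group
        _ = h⁻¹ * (f' (QuotientGroup.mk g) * h) * f' (QuotientGroup.mk h) := by rw [h1]
        _ = h⁻¹ * f' (QuotientGroup.mk g) * h * f' (QuotientGroup.mk h) := by group
    · intro x
      rw [hσ x, hf']
      group
  · rintro ⟨c, f, hfN, hfc, hcoc, hσ⟩
    refine ⟨⟨c, f, hfN, hσ⟩, ?_⟩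
    have hcen : ∀ q (x : G), x * f q = f q * x := by
      intro q x
      have hmem : f q ∈ Subgroup.center G := by
        refine hZ ⟨f q, hfN q⟩ ?_
        rw [Subgroup.mem_center_iff]
        intro m
        exact Subtype.ext ((hfc q m.1 m.2).symm)
      exact Subgroup.mem_center_iff.mp hmem x
    have hom : ∀ g h : G, f (QuotientGroup.mk (g * h)) =
        f (QuotientGroup.mk g) * f (QuotientGroup.mk h) := by
      intro g h
      rw [hcoc g h]
      have h1 := hcen (QuotientGroup.mk g) h
      calc h⁻¹ * f (QuotientGroup.mk g) * h * f (QuotientGroup.mk h)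
          = h⁻¹ * (h * f (QuotientGroup.mk g)) * f (QuotientGroup.mk h) := by
            rw [h1]; group
        _ = f (QuotientGroup.mk g) * f (QuotientGroup.mk h) := by group
    set e : G → G := fun g => c⁻¹ * g * c * f (QuotientGroup.mk g) with he
    have keyfun : ∀ g x : G, σ (x * g) = σ x * e g := by
      intro g x
      rw [hσ, hσ, he]
      have h1 := hcen (QuotientGroup.mk x) (c⁻¹ * g * c)
      calc x * g * c * f (QuotientGroup.mk (x * g))
          = x * g * c * (f (QuotientGroup.mk x) * f (QuotientGroup.mk g)) := by
            rw [hom x g]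
        _ = x * c * ((c⁻¹ * g * c) * f (QuotientGroup.mk x)) * f (QuotientGroup.mk g) := by
            group
        _ = x * c * (f (QuotientGroup.mk x) * (c⁻¹ * g * c)) * f (QuotientGroup.mk g) := by
            rw [h1]
        _ = x * c * f (QuotientGroup.mk x) *
              (c⁻¹ * g * c * f (QuotientGroup.mk g)) := by group
    have einj : Function.Injective e := by
      intro a b hab
      have hmk : ∀ g : G, (QuotientGroup.mk (e g) : G ⧸ N) =
          (QuotientGroup.mk c)⁻¹ * QuotientGroup.mk g * QuotientGroup.mk c := by
        intro g
        rw [he]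
        rw [QuotientGroup.mk_mul, QuotientGroup.mk_mul, QuotientGroup.mk_mul,
          (QuotientGroup.eq_one_iff _).mpr (hfN _), mul_one, QuotientGroup.mk_inv]
      have hq : (QuotientGroup.mk a : G ⧸ N) = QuotientGroup.mk b := by
        have h2 := congrArg (QuotientGroup.mk (s := N)) hab
        rw [hmk a, hmk b] at h2
        exact mul_left_cancel (mul_right_cancel h2)
      have hab' : c⁻¹ * a * c * f (QuotientGroup.mk b) =
          c⁻¹ * b * c * f (QuotientGroup.mk b) := by
        have h3 : e a = e b := hab
        rw [he] at h3
        simpa only [hq] using h3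
      have h4 : c⁻¹ * a * c = c⁻¹ * b * c := mul_right_cancel hab'
      calc a = c * (c⁻¹ * a * c) * c⁻¹ := by group
        _ = c * (c⁻¹ * b * c) * c⁻¹ := by rw [h4]
        _ = b := by group
    have esurj : Function.Surjective e := Finite.surjective_of_injective einj
    rw [Subgroup.mem_normalizer_iff]
    intro τ
    constructor
    · rintro ⟨g, hg⟩
      refine ⟨e g, fun x => ?_⟩
      simp only [Equiv.Perm.mul_apply]
      rw [hg, keyfun, Equiv.Perm.coe_inv, Equiv.apply_symm_apply]
    · rintro ⟨k, hk⟩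
      obtain ⟨g, hkg⟩ := esurj k
      refine ⟨g, fun y => ?_⟩
      have h2 := hk (σ y)
      simp only [Equiv.Perm.mul_apply, Equiv.Perm.coe_inv, Equiv.symm_apply_apply] at h2
      rw [← hkg, ← keyfun] at h2
      exact σ.injective h2
end

section
/- If a nontrivial finite group G admits a DRR, then G admits a DRR that is weakly connected and prime with respect to cartesian product. Similarly, if a nontrivial finite group G admits a GRR, then G admits a GRR that is connected and prime with respect to cartesian product. -/
/-! Common definitions: Cayley digraphs, digraph automorphism groups,
DRRs/GRRs, detecting groups, the regular representation, the group `W(G,N)`,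
wreath and cartesian products of digraphs, and the wreath product of groups. -/

universe u

----------------------------------------------------------------
-- infra
namespace StmtAux

/-- reverse-complement of a digraph -/
def dstar {V : Type*} (Adj : V → V → Prop) : V → V → Prop :=
  fun u v => u ≠ v ∧ ¬ Adj v u

/-- being an automorphism, unbundled -/
def IsAut {V : Type*} (Adj : V → V → Prop) (σ : Equiv.Perm V) : Prop :=
  ∀ u v, Adj (σ u) (σ v) ↔ Adj u v

theorem mem_aut_iff {V : Type*} {Adj : V → V → Prop} {σ : Equiv.Perm V} :
    σ ∈ digraphAut Adj ↔ IsAut Adj σ := Iff.rfl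

theorem isAut_congr {V : Type*} {Adj Adj' : V → V → Prop}
    (h : ∀ u v, Adj u v ↔ Adj' u v) {σ : Equiv.Perm V} (hσ : IsAut Adj σ) :
    IsAut Adj' σ := fun u v => by rw [← h, ← h]; exact hσ u v

theorem isAut_dstar {V : Type*} {Adj : V → V → Prop} {σ : Equiv.Perm V}
    (hσ : IsAut Adj σ) : IsAut (dstar Adj) σ := by
  intro u v
  unfold dstar
  rw [hσ v u]
  constructor
  · rintro ⟨h1, h2⟩; exact ⟨fun he => h1 (by rw [he]), h2⟩
  · rintro ⟨h1, h2⟩; exact ⟨fun he => h1 (σ.injective he), h2⟩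

theorem dstar_dstar {V : Type*} {Adj : V → V → Prop} (hl : ∀ v, ¬ Adj v v) :
    ∀ u v, dstar (dstar Adj) u v ↔ Adj u v := by
  intro u v
  unfold dstar
  constructor
  · rintro ⟨h1, h2⟩
    by_contra hA
    exact h2 ⟨fun he => h1 he.symm, hA⟩
  · intro hA
    have hne : u ≠ v := fun he => hl v (he ▸ hA)
    exact ⟨hne, fun h => h.2 hA⟩

theorem isAut_of_isAut_dstar {V : Type*} {Adj : V → V → Prop} (hl : ∀ v, ¬ Adj v v)
    {σ : Equiv.Perm V} (hσ : IsAut (dstar Adj) σ) : IsAut Adj σ :=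
  isAut_congr (dstar_dstar hl) (isAut_dstar hσ)

theorem aut_dstar_eq {V : Type*} {Adj : V → V → Prop} (hl : ∀ v, ¬ Adj v v) :
    digraphAut (dstar Adj) = digraphAut Adj := by
  ext σ
  exact ⟨fun h => isAut_of_isAut_dstar hl h, fun h => isAut_dstar h⟩

theorem aut_congr {V : Type*} {Adj Adj' : V → V → Prop}
    (h : ∀ u v, Adj u v ↔ Adj' u v) : digraphAut Adj = digraphAut Adj' := by
  ext σ
  exact ⟨fun hσ => isAut_congr h hσ, fun hσ => isAut_congr (fun u v => (h u v).symm) hσ⟩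

theorem weaklyConnected_congr {V : Type*} {Adj Adj' : V → V → Prop}
    (h : ∀ u v, Adj u v ↔ Adj' u v) (hc : WeaklyConnected Adj) : WeaklyConnected Adj' := by
  intro x y
  refine Relation.ReflTransGen.mono ?_ _ _ (hc x y)
  intro a b hab
  rcases hab with hab | hab
  · exact Or.inl ((h a b).mp hab)
  · exact Or.inr ((h b a).mp hab)

theorem isPrime_congr {V : Type u} {Adj Adj' : V → V → Prop}
    (h : ∀ u v, Adj u v ↔ Adj' u v) (hp : IsPrimeDigraph Adj) : IsPrimeDigraph Adj' := by
  refine ⟨hp.1, ?_⟩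
  rintro ⟨X, Y, A, B, e, hX, hY, hAdj⟩
  exact hp.2 ⟨X, Y, A, B, e, hX, hY, fun v w => (h v w).trans (hAdj v w)⟩

----------------------------------------------------------------
-- Cayley basics
variable {G : Type*} [Group G]

theorem cayAdj_iff {S : Set G} {u v : G} : cayAdj S u v ↔ v * u⁻¹ ∈ S := by
  constructor
  · rintro ⟨s, hs, rfl⟩; simpa using hs
  · intro h; exact ⟨v * u⁻¹, h, by group⟩

theorem regular_le_aut (S : Set G) : regularRep G ≤ digraphAut (cayAdj S) := by
  rintro σ ⟨g, hg⟩
  intro x y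
  simp only [cayAdj_iff, hg]
  constructor
  · intro h; simpa [mul_assoc] using h
  · intro h; simpa [mul_assoc] using h

/-- `G ≃* regularRep G` via `g ↦ (x ↦ x * g⁻¹)`. -/
noncomputable def regularEquiv (G : Type*) [Group G] : G ≃* regularRep G where
  toFun g := ⟨Equiv.mulRight g⁻¹, ⟨g⁻¹, fun _ => rfl⟩⟩
  invFun σ := (σ.1 1)⁻¹
  left_inv g := by simp
  right_inv := by
    rintro ⟨σ, g, hg⟩
    ext x
    simp [hg, hg 1]
  map_mul' g h := by
    ext x
    simp [mul_assoc]

theorem isDRR_of_aut_eq {S : Set G} (h : digraphAut (cayAdj S) = regularRep G) :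
    IsDRR G (cayAdj S) := by
  constructor
  · exact ⟨(MulEquiv.subgroupCongr h).trans (regularEquiv G).symm⟩
  · intro v w
    refine ⟨⟨Equiv.mulRight (v⁻¹ * w), ?_⟩, ?_, ?_⟩
    · rw [h]; exact ⟨v⁻¹ * w, fun x => rfl⟩
    · show v * (v⁻¹ * w) = w
      group
    · rintro ⟨τ, hτ⟩ hv
      have hτ' : τ ∈ regularRep G := h ▸ hτ
      obtain ⟨g, hg⟩ := hτ'
      have hgv : v * g = w := by rw [← hg]; exact hv
      have : g = v⁻¹ * w := by rw [← hgv]; group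
      subst this
      apply Subtype.ext
      ext x
      simp [hg, mul_assoc]

theorem aut_eq_of_isDRR [Fintype G] {S : Set G} (h : IsDRR G (cayAdj S)) :
    digraphAut (cayAdj S) = regularRep G := by
  have hle := regular_le_aut (G := G) S
  -- injective evaluation at 1
  have hinj : Function.Injective (fun σ : digraphAut (cayAdj S) => (σ : Equiv.Perm G) 1) := by
    intro σ τ hst
    obtain ⟨ρ, _, hu⟩ := h.2 1 ((σ : Equiv.Perm G) 1)
    rw [hu σ rfl, hu τ hst.symm]
  have hcard1 : Nat.card (digraphAut (cayAdj S)) ≤ Nat.card G :=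
    Nat.card_le_card_of_injective _ hinj
  have hcard2 : Nat.card G = Nat.card (regularRep G) := Nat.card_congr (regularEquiv G).toEquiv
  have hsub : (regularRep G : Set (Equiv.Perm G)) ⊆ (digraphAut (cayAdj S) : Set (Equiv.Perm G)) :=
    hle
  have hfin : (digraphAut (cayAdj S) : Set (Equiv.Perm G)).Finite := Set.toFinite _
  have hcard3 : (digraphAut (cayAdj S) : Set (Equiv.Perm G)).ncard ≤
      (regularRep G : Set (Equiv.Perm G)).ncard := by
    rw [← Nat.card_coe_set_eq, ← Nat.card_coe_set_eq]
    have e1 : Nat.card ((digraphAut (cayAdj S) : Set (Equiv.Perm G))) =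
        Nat.card (digraphAut (cayAdj S)) := rfl
    have e2 : Nat.card ((regularRep G : Set (Equiv.Perm G))) = Nat.card (regularRep G) := rfl
    rw [e1, e2]
    omega
  have := Set.eq_of_subset_of_ncard_le hsub hcard3 hfin
  exact (SetLike.ext'_iff.mpr this.symm)

end StmtAux

----------------------------------------------------------------
-- more Cayley lemmas
namespace StmtAux
variable {G : Type*} [Group G]

theorem cayAdj_sdiff_one {S : Set G} {u v : G} :
    cayAdj (S \ {1}) u v ↔ cayAdj S u v ∧ u ≠ v := by
  simp only [cayAdj_iff, Set.mem_diff, Set.mem_singleton_iff]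
  constructor
  · rintro ⟨h1, h2⟩
    refine ⟨h1, fun he => h2 ?_⟩
    rw [he]; group
  · rintro ⟨h1, h2⟩
    refine ⟨h1, fun he => h2 ?_⟩
    have : v = u := by
      have := mul_eq_one_iff_eq_inv.mp he
      rw [this]; group
    exact this.symm ▸ rfl

theorem aut_sdiff_one {S : Set G} :
    digraphAut (cayAdj (S \ {1})) = digraphAut (cayAdj S) := by
  ext σ
  rw [mem_aut_iff, mem_aut_iff]
  constructor
  · intro hσ u v
    have key : ∀ a b : G, cayAdj S a b ↔ (cayAdj (S \ {1}) a b ∨ (a = b ∧ (1:G) ∈ S)) := by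
      intro a b
      rw [cayAdj_sdiff_one]
      constructor
      · intro h
        by_cases hab : a = b
        · subst hab
          refine Or.inr ⟨rfl, ?_⟩
          rw [cayAdj_iff] at h; simpa using h
        · exact Or.inl ⟨h, hab⟩
      · rintro (⟨h, _⟩ | ⟨rfl, h⟩)
        · exact h
        · rw [cayAdj_iff]; simpa using h
    rw [key, key]
    constructor
    · rintro (h | ⟨he, h1⟩)
      · exact Or.inl ((hσ u v).mp h)
      · exact Or.inr ⟨σ.injective he, h1⟩
    · rintro (h | ⟨he, h1⟩)
      · exact Or.inl ((hσ u v).mpr h)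
      · exact Or.inr ⟨by rw [he], h1⟩
  · intro hσ u v
    rw [cayAdj_sdiff_one, cayAdj_sdiff_one]
    rw [hσ u v]
    constructor
    · rintro ⟨h1, h2⟩; exact ⟨h1, fun he => h2 (by rw [he])⟩
    · rintro ⟨h1, h2⟩; exact ⟨h1, fun he => h2 (σ.injective he)⟩

/-- the "reverse complement" connection set -/
def Sstar (S : Set G) : Set G := {g | g ≠ 1 ∧ g⁻¹ ∉ S}

theorem one_not_mem_Sstar (S : Set G) : (1:G) ∉ Sstar S := fun h => h.1 rfl

theorem cayAdj_Sstar {S : Set G} (u v : G) :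
    cayAdj (Sstar S) u v ↔ dstar (cayAdj S) u v := by
  rw [cayAdj_iff]
  unfold Sstar dstar
  simp only [Set.mem_setOf_eq, cayAdj_iff]
  constructor
  · rintro ⟨h1, h2⟩
    refine ⟨fun he => h1 (by rw [he]; group), ?_⟩
    convert h2 using 2
    group
  · rintro ⟨h1, h2⟩
    refine ⟨fun he => h1 ?_, ?_⟩
    · have : v = u := by
        have h' : v = 1 * u := by rw [← he]; group
        simpa using h'
      exact this.symm
    · convert h2 using 2
      group

theorem Sstar_Sstar {S : Set G} (h1 : (1:G) ∉ S) : Sstar (Sstar S) = S := by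
  ext g
  unfold Sstar
  simp only [Set.mem_setOf_eq, not_and, not_not, inv_inv]
  constructor
  · rintro ⟨hg, h⟩
    rcases Classical.em (g⁻¹ = 1) with he | he
    · exact absurd (by rw [← inv_inv g, he]; group) hg
    · exact h he
  · intro hg
    refine ⟨fun he => h1 (he ▸ hg), fun _ => hg⟩

theorem Sstar_symm {S : Set G} (h : ∀ s ∈ S, s⁻¹ ∈ S) : ∀ s ∈ Sstar S, s⁻¹ ∈ Sstar S := by
  rintro s ⟨hs1, hs2⟩
  refine ⟨fun he => hs1 (by rw [← inv_inv s, he]; group), ?_⟩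
  rw [inv_inv]
  intro hsS
  exact hs2 (h s hsS)

theorem cayAdj_loopless {S : Set G} (h1 : (1:G) ∉ S) : ∀ v : G, ¬ cayAdj S v v := by
  intro v h
  rw [cayAdj_iff] at h
  simpa using h1 (by simpa using h)

theorem aut_Sstar {S : Set G} (h1 : (1:G) ∉ S) :
    digraphAut (cayAdj (Sstar S)) = digraphAut (cayAdj S) := by
  rw [aut_congr (cayAdj_Sstar (S := S))]
  exact aut_dstar_eq (cayAdj_loopless h1)

theorem symm_cayAdj {S : Set G} (h : ∀ s ∈ S, s⁻¹ ∈ S) : Symmetric (cayAdj S) := by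
  intro u v huv
  rw [cayAdj_iff] at huv ⊢
  have := h _ huv
  convert this using 1
  group

end StmtAux

----------------------------------------------------------------
-- connectivity lemmas
namespace StmtAux

variable {V : Type*}

/-- underlying undirected reachability -/
def und (Adj : V → V → Prop) : V → V → Prop := fun a b => Adj a b ∨ Adj b a

theorem und_symm (Adj : V → V → Prop) : Symmetric (und Adj) := fun _ _ h => h.symm

theorem reach_symm (Adj : V → V → Prop) :
    Symmetric (Relation.ReflTransGen (und Adj)) :=
  fun a b h => (@Relation.ReflTransGen.stdSymm _ _ ⟨und_symm Adj⟩).symm a b h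

/-- if a digraph is not weakly connected, its reverse-complement is weakly connected -/
theorem dstar_connected_of_not_connected {Adj : V → V → Prop}
    (h : ¬ WeaklyConnected Adj) : WeaklyConnected (dstar Adj) := by
  unfold WeaklyConnected at h
  push_neg at h
  obtain ⟨p, q, hpq⟩ := h
  have step : ∀ s t : V, ¬ Relation.ReflTransGen (und Adj) s t →
      und (dstar Adj) s t := by
    intro s t hst
    have hne : s ≠ t := fun he => hst (he ▸ Relation.ReflTransGen.refl)
    have hnadj : ¬ Adj s t ∧ ¬ Adj t s := by
      constructor
      · exact fun ha => hst (Relation.ReflTransGen.single (Or.inl ha))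
      · exact fun ha => hst (Relation.ReflTransGen.single (Or.inr ha))
    exact Or.inl ⟨hne, hnadj.2⟩
  intro x y
  by_cases hxy : Relation.ReflTransGen (und Adj) x y
  · -- find z not reachable from x
    have hz : ¬ Relation.ReflTransGen (und Adj) x p ∨
        ¬ Relation.ReflTransGen (und Adj) x q := by
      by_contra hc
      push_neg at hc
      exact hpq (Relation.ReflTransGen.trans (reach_symm Adj hc.1) hc.2)
    obtain hz | hz := hz
    · have hyz : ¬ Relation.ReflTransGen (und Adj) y p := fun hr => hz (hxy.trans hr)
      have h1 := step x p hz
      have h2 := step y p hyz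
      exact (Relation.ReflTransGen.single h1).trans
        (Relation.ReflTransGen.single (und_symm _ h2))
    · have hyz : ¬ Relation.ReflTransGen (und Adj) y q := fun hr => hz (hxy.trans hr)
      have h1 := step x q hz
      have h2 := step y q hyz
      exact (Relation.ReflTransGen.single h1).trans
        (Relation.ReflTransGen.single (und_symm _ h2))
  · exact Relation.ReflTransGen.single (step x y hxy)

theorem weaklyConnected_sdiff_one {G : Type*} [Group G] {S : Set G}
    (h : WeaklyConnected (cayAdj S)) : WeaklyConnected (cayAdj (S \ {1})) := by
  intro x y
  refine Relation.ReflTransGen.head_induction_on (h x y) Relation.ReflTransGen.refl ?_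
  intro a c hac hcy ih
  by_cases hac' : a = c
  · exact hac' ▸ ih
  · refine Relation.ReflTransGen.head ?_ ih
    rcases hac with hac | hac
    · exact Or.inl (cayAdj_sdiff_one.mpr ⟨hac, hac'⟩)
    · exact Or.inr (cayAdj_sdiff_one.mpr ⟨hac, fun he => hac' he.symm⟩)

end StmtAux

----------------------------------------------------------------
-- decomposition API
namespace StmtAux

structure Dcp {V : Type u} (Adj : V → V → Prop) where
  X : Type u
  Y : Type u
  A : X → X → Prop
  B : Y → Y → Prop
  e : V ≃ X × Y
  hX : ∃ a b : X, a ≠ b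
  hY : ∃ a b : Y, a ≠ b
  hAdj : ∀ v w, Adj v w ↔ cartAdj A B (e v) (e w)

namespace Dcp

variable {V : Type u} {Adj : V → V → Prop} (D : Dcp Adj)

def px (v : V) : D.X := (D.e v).1
def py (v : V) : D.Y := (D.e v).2
def mk' (x : D.X) (y : D.Y) : V := D.e.symm (x, y)

theorem px_mk' (x : D.X) (y : D.Y) : D.px (D.mk' x y) = x := by
  simp [px, mk']

theorem py_mk' (x : D.X) (y : D.Y) : D.py (D.mk' x y) = y := by
  simp [py, mk']

theorem ext' {v w : V} (h1 : D.px v = D.px w) (h2 : D.py v = D.py w) : v = w := by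
  have : D.e v = D.e w := Prod.ext h1 h2
  exact D.e.injective this

theorem mk'_eq {v : V} {x : D.X} {y : D.Y} (h1 : D.px v = x) (h2 : D.py v = y) :
    D.mk' x y = v := by
  apply D.ext' <;> simp [px_mk', py_mk', h1.symm, h2.symm]

theorem adj_iff (v w : V) :
    Adj v w ↔ (D.px v = D.px w ∧ D.B (D.py v) (D.py w)) ∨
      (D.py v = D.py w ∧ D.A (D.px v) (D.px w)) := D.hAdj v w

theorem adj_coord {v w : V} (h : Adj v w) : D.px v = D.px w ∨ D.py v = D.py w := by
  rcases (D.adj_iff v w).mp h with ⟨h1, _⟩ | ⟨h1, _⟩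
  · exact Or.inl h1
  · exact Or.inr h1

/-- factors are loopless if the digraph is -/
theorem A_loopless (hl : ∀ v, ¬ Adj v v) (x : D.X) : ¬ D.A x x := by
  intro hA
  obtain ⟨y, -⟩ := D.hY
  exact hl (D.mk' x y) ((D.adj_iff _ _).mpr (Or.inr (by simp [px_mk', py_mk', hA])))

theorem B_loopless (hl : ∀ v, ¬ Adj v v) (y : D.Y) : ¬ D.B y y := by
  intro hB
  obtain ⟨x, -⟩ := D.hX
  exact hl (D.mk' x y) ((D.adj_iff _ _).mpr (Or.inl (by simp [px_mk', py_mk', hB])))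

theorem B_transfer (hl : ∀ v, ¬ Adj v v) {v w : V} (h : D.px v = D.px w) :
    Adj v w ↔ D.B (D.py v) (D.py w) := by
  constructor
  · intro hadj
    rcases (D.adj_iff v w).mp hadj with ⟨_, hB⟩ | ⟨hy, _⟩
    · exact hB
    · exact absurd hadj (D.ext' h hy ▸ hl w)
  · intro hB
    exact (D.adj_iff v w).mpr (Or.inl ⟨h, hB⟩)

theorem A_transfer (hl : ∀ v, ¬ Adj v v) {v w : V} (h : D.py v = D.py w) :
    Adj v w ↔ D.A (D.px v) (D.px w) := by
  constructor
  · intro hadj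
    rcases (D.adj_iff v w).mp hadj with ⟨hx, _⟩ | ⟨_, hA⟩
    · exact absurd hadj (D.ext' hx h ▸ hl w)
    · exact hA
  · intro hA
    exact (D.adj_iff v w).mpr (Or.inr ⟨h, hA⟩)

theorem not_adj_of_diffboth {v w : V} (h1 : D.px v ≠ D.px w) (h2 : D.py v ≠ D.py w) :
    ¬ Adj v w := by
  intro h
  rcases D.adj_coord h with h' | h'
  · exact h1 h'
  · exact h2 h'

/-- swap the two factors -/
def swap : Dcp Adj where
  X := D.Y
  Y := D.X
  A := D.B
  B := D.A
  e := D.e.trans (Equiv.prodComm _ _)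
  hX := D.hY
  hY := D.hX
  hAdj := by
    intro v w
    rw [D.hAdj v w]
    unfold cartAdj
    simp only [Equiv.trans_apply, Equiv.prodComm_apply, Prod.fst_swap, Prod.snd_swap]
    tauto

theorem swap_px (v : V) : D.swap.px v = D.py v := rfl
theorem swap_py (v : V) : D.swap.py v = D.px v := rfl

-- finiteness
theorem finiteX [Finite V] : Finite D.X := by
  obtain ⟨y, -⟩ := D.hY
  have : Finite (D.X × D.Y) := Finite.of_equiv V D.e
  exact Finite.of_injective (fun x => ((x, y) : D.X × D.Y)) (fun a b h => congrArg Prod.fst h)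

theorem finiteY [Finite V] : Finite D.Y := by
  obtain ⟨x, -⟩ := D.hX
  have : Finite (D.X × D.Y) := Finite.of_equiv V D.e
  exact Finite.of_injective (fun y => ((x, y) : D.X × D.Y)) (fun a b h => congrArg Prod.snd h)

theorem card_eq [Finite V] : Nat.card V = Nat.card D.X * Nat.card D.Y := by
  rw [Nat.card_congr D.e, Nat.card_prod]

theorem two_le_cardX [Finite V] : 2 ≤ Nat.card D.X := by
  have := D.finiteX
  obtain ⟨a, b, hab⟩ := D.hX
  have : Nontrivial D.X := ⟨a, b, hab⟩
  exact Finite.one_lt_card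

theorem two_le_cardY [Finite V] : 2 ≤ Nat.card D.Y := by
  have := D.finiteY
  obtain ⟨a, b, hab⟩ := D.hY
  have : Nontrivial D.Y := ⟨a, b, hab⟩
  exact Finite.one_lt_card

end Dcp
end StmtAux

----------------------------------------------------------------
-- regularity helpers and rows-digon lemma
namespace StmtAux

variable {V : Type u} {Adj : V → V → Prop}

/-- transitivity, unbundled -/
def TransAut (Adj : V → V → Prop) : Prop :=
  ∀ v w : V, ∃ σ : Equiv.Perm V, IsAut Adj σ ∧ σ v = w

/-- freeness, unbundled -/
def FreeAut (Adj : V → V → Prop) : Prop :=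
  ∀ σ : Equiv.Perm V, IsAut Adj σ → ∀ v, σ v = v → σ = Equiv.refl V

theorem transAut_of_reg (reg : ∀ v w : V, ∃! σ : digraphAut Adj, (σ : Equiv.Perm V) v = w) :
    TransAut Adj := by
  intro v w
  obtain ⟨σ, hσ, -⟩ := reg v w
  exact ⟨σ.1, σ.2, hσ⟩

theorem freeAut_of_reg (reg : ∀ v w : V, ∃! σ : digraphAut Adj, (σ : Equiv.Perm V) v = w) :
    FreeAut Adj := by
  intro σ hσ v hv
  obtain ⟨τ, -, hu⟩ := reg v v
  have h1 := hu ⟨σ, hσ⟩ hv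
  have h2 := hu ⟨(1 : Equiv.Perm V), (digraphAut Adj).one_mem⟩ rfl
  have : σ = (1 : Equiv.Perm V) := by
    have := h1.trans h2.symm
    exact congrArg Subtype.val this
  rw [this]
  rfl

theorem transAut_dstar (h : TransAut Adj) : TransAut (dstar Adj) := by
  intro v w
  obtain ⟨σ, hσ, he⟩ := h v w
  exact ⟨σ, isAut_dstar hσ, he⟩

theorem freeAut_dstar (hl : ∀ v, ¬ Adj v v) (h : FreeAut Adj) : FreeAut (dstar Adj) := by
  intro σ hσ v hv
  exact h σ (isAut_of_isAut_dstar hl hσ) v hv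

/-- automorphisms preserve out-neighbourhood sizes -/
theorem ncard_out_eq (htr : TransAut Adj) (v w : V) :
    {u | Adj v u}.ncard = {u | Adj w u}.ncard := by
  obtain ⟨σ, hσ, he⟩ := htr v w
  have himg : σ '' {u | Adj v u} = {u | Adj w u} := by
    ext u'
    simp only [Set.mem_image, Set.mem_setOf_eq]
    constructor
    · rintro ⟨u, hu, rfl⟩
      rw [← he]
      exact (hσ v u).mpr hu
    · intro hu'
      refine ⟨σ.symm u', ?_, by simp⟩
      have : Adj (σ v) (σ (σ.symm u')) ↔ Adj v (σ.symm u') := hσ v (σ.symm u')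
      rw [he] at this
      simp only [Equiv.apply_symm_apply] at this
      exact this.mp hu'
  rw [← himg, Set.ncard_image_of_injective _ σ.injective]

/-- two-element type packaging -/
theorem two_elt {X : Type*} (h : Nat.card X = 2) :
    ∃ x0 x1 : X, x0 ≠ x1 ∧ ∀ x : X, x = x0 ∨ x = x1 := by
  obtain ⟨x0, x1, hne, huniv⟩ := Nat.card_eq_two_iff.mp h
  refine ⟨x0, x1, hne, fun x => ?_⟩
  have : x ∈ ({x0, x1} : Set X) := huniv ▸ Set.mem_univ x
  simpa using this

namespace Dcp

variable (D : Dcp Adj)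

theorem exists_cross_arc (hconn : WeaklyConnected Adj) :
    ∃ v w : V, Adj v w ∧ D.px v ≠ D.px w := by
  by_contra hc
  push_neg at hc
  obtain ⟨a, b, hab⟩ := D.hX
  obtain ⟨y, -⟩ := D.hY
  have key : ∀ p q : V, Relation.ReflTransGen (fun s t => Adj s t ∨ Adj t s) p q →
      D.px p = D.px q := by
    intro p q h
    induction h with
    | refl => rfl
    | tail h1 h2 ih =>
      rcases h2 with h2 | h2
      · exact ih.trans (hc _ _ h2)
      · exact ih.trans (hc _ _ h2).symm
  have := key (D.mk' a y) (D.mk' b y) (hconn _ _)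
  rw [D.px_mk', D.px_mk'] at this
  exact hab this

end Dcp

/-- key structural lemma: if the first factor has two elements, then all "rows"
(pairs sharing the second coordinate) are digons. -/
theorem rows_digon [Fintype V] (D : Dcp Adj) (hl : ∀ v, ¬ Adj v v)
    (htr : TransAut Adj) (hconn : WeaklyConnected Adj) (h2 : Nat.card D.X = 2) :
    ∀ v w : V, D.py v = D.py w → v ≠ w → Adj v w ∧ Adj w v := by
  classical
  obtain ⟨x0, x1, hx01, hx⟩ := two_elt h2
  -- the "other" element
  set ox : D.X → D.X := fun x => if x = x0 then x1 else x0 with hox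
  have hox_ne : ∀ x, ox x ≠ x := by
    intro x hx'
    by_cases h : x = x0
    · rw [hox] at hx'
      simp only [if_pos h] at hx'
      exact hx01 (hx'.trans h).symm
    · rw [hox] at hx'
      simp only [if_neg h] at hx'
      exact h hx'.symm
  have hcov : ∀ x x' : D.X, x ≠ x' → x' = ox x := by
    intro x x' hne
    by_cases h : x = x0
    · rw [hox]; simp only [if_pos h]
      rcases hx x' with h' | h'
      · exact absurd (h.trans h'.symm) hne
      · exact h'
    · rw [hox]; simp only [if_neg h]
      rcases hx x' with h' | h'
      · exact h'
      · rcases hx x with hh | hh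
        · exact absurd hh h
        · exact absurd (hh.trans h'.symm) hne
  have hoxox : ∀ x, ox (ox x) = x := by
    intro x
    by_cases h : x = x0
    · rw [hox]
      simp only [if_pos h]
      simp only [if_neg (fun e => hx01 e.symm : x1 ≠ x0)]
      exact h.symm
    · rw [hox]
      simp only [if_neg h, if_pos rfl]
      rcases hx x with hh | hh
      · exact absurd hh h
      · exact hh.symm
  -- row partner
  set r : V → V := fun v => D.mk' (ox (D.px v)) (D.py v) with hr
  have hr_px : ∀ v, D.px (r v) = ox (D.px v) := fun v => D.px_mk' _ _
  have hr_py : ∀ v, D.py (r v) = D.py v := fun v => D.py_mk' _ _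
  have hr_ne : ∀ v, r v ≠ v := by
    intro v he
    have := hr_px v
    rw [he] at this
    exact hox_ne _ this.symm
  -- out-set splitting
  have hsplit : ∀ v : V, {u | Adj v u} ⊆ {u | Adj v u ∧ D.px u = D.px v} ∪ {r v} := by
    intro v u hu
    simp only [Set.mem_setOf_eq] at hu
    by_cases hpx : D.px u = D.px v
    · exact Or.inl ⟨hu, hpx⟩
    · right
      rcases D.adj_coord hu with h | h
      · exact absurd h.symm hpx
      · have : u = D.mk' (ox (D.px v)) (D.py v) := by
          refine (D.mk'_eq ?_ ?_).symm
          · exact hcov _ _ (fun e => hpx e.symm)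
          · exact h.symm
        exact this
  have houtCol : ∀ v : V, {u | Adj v u ∧ D.px u = D.px v}.ncard =
      {u | Adj (r v) u ∧ D.px u = D.px (r v)}.ncard := by
    intro v
    set φ : V → V := fun u => D.mk' (D.px (r v)) (D.py u) with hφ
    have himg : φ '' {u | Adj v u ∧ D.px u = D.px v} =
        {u | Adj (r v) u ∧ D.px u = D.px (r v)} := by
      ext u'
      simp only [Set.mem_image, Set.mem_setOf_eq]
      constructor
      · rintro ⟨u, ⟨hadj, hpx⟩, rfl⟩
        have hB : D.B (D.py v) (D.py u) := (D.B_transfer hl hpx.symm).mp hadj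
        refine ⟨?_, D.px_mk' _ _⟩
        have h1 : D.px (r v) = D.px (φ u) := (D.px_mk' _ _).symm
        rw [D.B_transfer hl h1]
        rw [hr_py, hφ]
        rw [D.py_mk']
        exact hB
      · rintro ⟨hadj, hpx⟩
        refine ⟨D.mk' (D.px v) (D.py u'), ⟨?_, D.px_mk' _ _⟩, ?_⟩
        · have hB : D.B (D.py (r v)) (D.py u') := (D.B_transfer hl hpx.symm).mp hadj
          rw [hr_py] at hB
          have h1 : D.px v = D.px (D.mk' (D.px v) (D.py u')) := (D.px_mk' _ _).symm
          rw [D.B_transfer hl h1, D.py_mk']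
          exact hB
        · exact D.mk'_eq hpx (D.py_mk' _ _).symm
    have hinj : Set.InjOn φ {u | Adj v u ∧ D.px u = D.px v} := by
      rintro u1 ⟨-, h1⟩ u2 ⟨-, h2⟩ he
      have hpy : D.py u1 = D.py u2 := by
        have := congrArg D.py he
        rwa [hφ, D.py_mk', D.py_mk'] at this
      exact D.ext' (h1.trans h2.symm) hpy
    rw [← himg, Set.ncard_image_of_injOn hinj]
  -- digon iff at rows
  have hdigrow : ∀ v : V, Adj v (r v) ↔ Adj (r v) v := by
    intro v
    have hout := ncard_out_eq htr v (r v)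
    have hcalc : ∀ w : V, {u | Adj w u}.ncard =
        {u | Adj w u ∧ D.px u = D.px w}.ncard + (if Adj w (r w) then 1 else 0) := by
      intro w
      by_cases hA : Adj w (r w)
      · have : {u | Adj w u} = {u | Adj w u ∧ D.px u = D.px w} ∪ {r w} := by
          apply Set.Subset.antisymm (hsplit w)
          rintro u (hu | hu)
          · exact hu.1
          · simp only [Set.mem_singleton_iff] at hu
            subst hu; exact hA
        have hdisj : Disjoint {u | Adj w u ∧ D.px u = D.px w} ({r w} : Set V) := by
          simp only [Set.disjoint_singleton_right, Set.mem_setOf_eq]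
          rintro ⟨-, hpx⟩
          rw [hr_px] at hpx
          exact hox_ne _ hpx
        rw [this, Set.ncard_union_eq hdisj, Set.ncard_singleton, if_pos hA]
      · have : {u | Adj w u} = {u | Adj w u ∧ D.px u = D.px w} := by
          apply Set.Subset.antisymm
          · intro u hu
            rcases hsplit w hu with h | h
            · exact h
            · simp only [Set.mem_singleton_iff] at h
              subst h; exact absurd hu hA
          · exact fun u hu => hu.1
        rw [this, if_neg hA, Nat.add_zero]
    have h1 := hcalc v
    have h2 := hcalc (r v)
    rw [hout] at h1
    rw [← houtCol v] at h2
    -- note r (r v) = v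
    have hrr : r (r v) = v := by
      apply D.ext'
      · rw [hr_px, hr_px, hoxox]
      · rw [hr_py, hr_py]
    rw [hrr] at h2
    by_cases hA1 : Adj v (r v) <;> by_cases hA2 : Adj (r v) v <;>
      simp [hA1, hA2] at h1 h2 ⊢ <;> omega
  -- there is a cross arc, hence a digon row, hence A is a full digon
  obtain ⟨p, q, hpq, hpq'⟩ := D.exists_cross_arc hconn
  have hqr : q = r p := by
    rcases D.adj_coord hpq with h | h
    · exact absurd h hpq'
    · exact (D.mk'_eq (hcov _ _ hpq') h.symm).symm
  have hdig : Adj p (r p) ∧ Adj (r p) p := by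
    rw [hqr] at hpq
    exact ⟨hpq, (hdigrow p).mp hpq⟩
  have hApair : D.A (D.px p) (D.px (r p)) ∧ D.A (D.px (r p)) (D.px p) := by
    constructor
    · exact (D.A_transfer hl (hr_py p).symm).mp hdig.1
    · exact (D.A_transfer hl (hr_py p)).mp hdig.2
  have hAfull : ∀ x x' : D.X, x ≠ x' → D.A x x' := by
    intro x x' hne
    have hrpx : D.px (r p) = ox (D.px p) := hr_px p
    have hkey : (x = D.px p ∧ x' = D.px (r p)) ∨ (x = D.px (r p) ∧ x' = D.px p) := by
      by_cases h : x = D.px p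
      · left
        refine ⟨h, ?_⟩
        rw [hcov x x' hne, h, hrpx]
      · right
        have hx1 : x = D.px (r p) := by
          rw [hrpx, ← hcov (D.px p) x (fun e => h e.symm)]
        refine ⟨hx1, ?_⟩
        rw [hcov x x' hne, hx1, hrpx, hoxox]
    rcases hkey with ⟨rfl, rfl⟩ | ⟨rfl, rfl⟩
    · exact hApair.1
    · exact hApair.2
  intro v w hpy hne
  have hpx : D.px v ≠ D.px w := fun he => hne (D.ext' he hpy)
  constructor
  · exact (D.A_transfer hl hpy).mpr (hAfull _ _ hpx)
  · exact (D.A_transfer hl hpy.symm).mpr (hAfull _ _ hpx.symm)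

end StmtAux

----------------------------------------------------------------
-- small-type helpers, Lemma Z, star-connectivity
namespace StmtAux

theorem exists_third {α : Type*} [Finite α] (h3 : 3 ≤ Nat.card α) (a b : α) :
    ∃ c : α, c ≠ a ∧ c ≠ b := by
  by_contra hc
  push_neg at hc
  have hsub : (Set.univ : Set α) ⊆ {a, b} := by
    intro c _
    rcases Classical.em (c = a) with h | h
    · simp [h]
    · simp [hc c h]
  have h1 : (Set.univ : Set α).ncard ≤ ({a, b} : Set α).ncard :=
    Set.ncard_le_ncard hsub (Set.toFinite _)
  have h2 : ({a, b} : Set α).ncard ≤ 2 := by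
    refine le_trans (Set.ncard_insert_le _ _) ?_
    simp
  rw [Set.ncard_univ] at h1
  omega

theorem exists_ne_of_two_le {α : Type*} [Finite α] (h2 : 2 ≤ Nat.card α) (a : α) :
    ∃ b : α, b ≠ a := by
  have : Nontrivial α := Finite.one_lt_card_iff_nontrivial.mp h2
  exact exists_ne a

variable {V : Type u} {Adj : V → V → Prop}

namespace Dcp

/-- diffboth pairs give star-edges -/
theorem und_dstar_of_diffboth (D : Dcp Adj) {v w : V}
    (h1 : D.px v ≠ D.px w) (h2 : D.py v ≠ D.py w) : und (dstar Adj) v w := by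
  refine Or.inl ⟨fun he => h1 (congrArg D.px he), ?_⟩
  exact D.not_adj_of_diffboth (fun he => h1 he.symm) (fun he => h2 he.symm)

theorem star_conn_of_three [Finite V] (D : Dcp Adj) (h3 : 3 ≤ Nat.card D.X) :
    WeaklyConnected (dstar Adj) := by
  classical
  have hfinX := D.finiteX
  have hfinY := D.finiteY
  have h2Y := D.two_le_cardY
  intro v w
  by_cases hvw : v = w
  · exact hvw ▸ Relation.ReflTransGen.refl
  by_cases hdb : D.px v ≠ D.px w ∧ D.py v ≠ D.py w
  · exact Relation.ReflTransGen.single (D.und_dstar_of_diffboth hdb.1 hdb.2)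
  push_neg at hdb
  by_cases hpx : D.px v = D.px w
  · -- same column
    have hpy : D.py v ≠ D.py w := fun he => hvw (D.ext' hpx he)
    by_cases hy3 : ∃ y3 : D.Y, y3 ≠ D.py v ∧ y3 ≠ D.py w
    · obtain ⟨y3, hy3v, hy3w⟩ := hy3
      obtain ⟨x', hx'⟩ := exists_ne_of_two_le D.two_le_cardX (D.px v)
      set m := D.mk' x' y3 with hm
      have s1 : und (dstar Adj) v m :=
        D.und_dstar_of_diffboth (by rw [D.px_mk']; exact fun e => hx' e.symm)
          (by rw [D.py_mk']; exact fun e => hy3v e.symm)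
      have s2 : und (dstar Adj) m w :=
        D.und_dstar_of_diffboth (by rw [D.px_mk']; rw [← hpx]; exact hx')
          (by rw [D.py_mk']; exact hy3w)
      exact (Relation.ReflTransGen.single s1).trans (Relation.ReflTransGen.single s2)
    · obtain ⟨x2, hx2⟩ := exists_ne_of_two_le D.two_le_cardX (D.px v)
      obtain ⟨x3, hx3a, hx3b⟩ := exists_third h3 x2 (D.px v)
      set m1 := D.mk' x2 (D.py w) with hm1
      set m2 := D.mk' x3 (D.py v) with hm2
      have s1 : und (dstar Adj) v m1 :=
        D.und_dstar_of_diffboth (by rw [D.px_mk']; exact fun e => hx2 e.symm)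
          (by rw [D.py_mk']; exact hpy)
      have s2 : und (dstar Adj) m1 m2 :=
        D.und_dstar_of_diffboth (by rw [D.px_mk', D.px_mk']; exact fun e => hx3a e.symm)
          (by rw [D.py_mk', D.py_mk']; exact fun e => hpy e.symm)
      have s3 : und (dstar Adj) m2 w :=
        D.und_dstar_of_diffboth (by rw [D.px_mk', ← hpx]; exact hx3b)
          (by rw [D.py_mk']; exact hpy)
      exact ((Relation.ReflTransGen.single s1).trans (Relation.ReflTransGen.single s2)).trans
        (Relation.ReflTransGen.single s3)
  · -- same row (or nothing shared handled above)
    have hpy : D.py v = D.py w := by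
      rcases Classical.em (D.py v = D.py w) with h | h
      · exact h
      · exact absurd (hdb (fun e => hpx e)) (fun e => h e)
    obtain ⟨x3, hx3a, hx3b⟩ := exists_third h3 (D.px v) (D.px w)
    obtain ⟨y', hy'⟩ := exists_ne_of_two_le h2Y (D.py v)
    set m := D.mk' x3 y' with hm
    have s1 : und (dstar Adj) v m :=
      D.und_dstar_of_diffboth (by rw [D.px_mk']; exact fun e => hx3a e.symm)
        (by rw [D.py_mk']; exact fun e => hy' e.symm)
    have s2 : und (dstar Adj) m w :=
      D.und_dstar_of_diffboth (by rw [D.px_mk']; exact hx3b)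
        (by rw [D.py_mk', ← hpy]; exact hy')
    exact (Relation.ReflTransGen.single s1).trans (Relation.ReflTransGen.single s2)

end Dcp

/-- two-element equiv construction -/
noncomputable def twoEquiv {α β : Type*} {a0 a1 : α} {b0 b1 : β}
    (ha : a0 ≠ a1) (hacov : ∀ a : α, a = a0 ∨ a = a1)
    (hb : b0 ≠ b1) (hbcov : ∀ b : β, b = b0 ∨ b = b1) : α ≃ β := by
  classical
  refine ⟨fun a => if a = a0 then b0 else b1, fun b => if b = b0 then a0 else a1, ?_, ?_⟩
  · intro a
    show (if (if a = a0 then b0 else b1) = b0 then a0 else a1) = a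
    by_cases h : a = a0
    · rw [if_pos h, if_pos rfl, h]
    · rw [if_neg h, if_neg hb.symm]
      rcases hacov a with h' | h'
      · exact absurd h' h
      · exact h'.symm
  · intro b
    show (if (if b = b0 then a0 else a1) = a0 then b0 else b1) = b
    by_cases h : b = b0
    · rw [if_pos h, if_pos rfl, h]
    · rw [if_neg h, if_neg ha.symm]
      rcases hbcov b with h' | h'
      · exact absurd h' h
      · exact h'.symm

theorem twoEquiv_apply0 {α β : Type*} {a0 a1 : α} {b0 b1 : β}
    (ha : a0 ≠ a1) (hacov : ∀ a : α, a = a0 ∨ a = a1)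
    (hb : b0 ≠ b1) (hbcov : ∀ b : β, b = b0 ∨ b = b1) :
    twoEquiv ha hacov hb hbcov a0 = b0 := by simp [twoEquiv]

theorem twoEquiv_apply1 {α β : Type*} {a0 a1 : α} {b0 b1 : β}
    (ha : a0 ≠ a1) (hacov : ∀ a : α, a = a0 ∨ a = a1)
    (hb : b0 ≠ b1) (hbcov : ∀ b : β, b = b0 ∨ b = b1) :
    twoEquiv ha hacov hb hbcov a1 = b1 := by
  simp only [twoEquiv, Equiv.coe_fn_mk]
  rw [if_neg ha.symm]

/-- Lemma Z : no connected loopless digraph with free+transitive automorphism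
group is a product of two 2-element digraphs -/
theorem lemZ [Fintype V] (D : Dcp Adj) (hl : ∀ v, ¬ Adj v v)
    (htr : TransAut Adj) (hfree : FreeAut Adj) (hconn : WeaklyConnected Adj)
    (h2X : Nat.card D.X = 2) (h2Y : Nat.card D.Y = 2) : False := by
  classical
  have rowsX := rows_digon D hl htr hconn h2X
  have rowsY := rows_digon D.swap hl htr hconn (by rw [← h2Y]; rfl)
  -- full characterization
  have hchar : ∀ v w : V, Adj v w ↔ (v ≠ w ∧ (D.px v = D.px w ∨ D.py v = D.py w)) := by
    intro v w
    constructor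
    · intro h
      exact ⟨fun he => hl v (he ▸ h), D.adj_coord h⟩
    · rintro ⟨hne, h | h⟩
      · exact (rowsY v w h hne).1
      · exact (rowsX v w h hne).1
  obtain ⟨x0, x1, hx01, hxcov⟩ := two_elt h2X
  obtain ⟨y0, y1, hy01, hycov⟩ := two_elt h2Y
  set φ : D.X ≃ D.Y := twoEquiv hx01 hxcov hy01 hycov with hφ
  set σ : Equiv.Perm V :=
    (D.e.trans ((Equiv.prodComm D.X D.Y).trans (φ.symm.prodCongr φ))).trans D.e.symm with hσdef
  have hσ_eval : ∀ v : V, σ v = D.mk' (φ.symm (D.py v)) (φ (D.px v)) := by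
    intro v; rfl
  have hσpx : ∀ v : V, D.px (σ v) = φ.symm (D.py v) := by
    intro v; rw [hσ_eval, D.px_mk']
  have hσpy : ∀ v : V, D.py (σ v) = φ (D.px v) := by
    intro v; rw [hσ_eval, D.py_mk']
  have hIsAut : IsAut Adj σ := by
    intro v w
    rw [hchar, hchar]
    constructor
    · rintro ⟨hne, h | h⟩
      · refine ⟨fun he => hne (by rw [he]), ?_⟩
        rw [hσpx v, hσpx w] at h
        exact Or.inr (φ.symm.injective h)
      · refine ⟨fun he => hne (by rw [he]), ?_⟩
        rw [hσpy v, hσpy w] at h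
        exact Or.inl (φ.injective h)
    · rintro ⟨hne, h | h⟩
      · refine ⟨fun he => hne (σ.injective he), ?_⟩
        rw [hσpy v, hσpy w, h]
        exact Or.inr rfl
      · refine ⟨fun he => hne (σ.injective he), ?_⟩
        rw [hσpx v, hσpx w, h]
        exact Or.inl rfl
  -- fixed point and moved point
  have hfix : σ (D.mk' x0 y0) = D.mk' x0 y0 := by
    rw [hσ_eval, D.px_mk', D.py_mk']
    have h1 : φ x0 = y0 := twoEquiv_apply0 hx01 hxcov hy01 hycov
    have h2 : φ.symm y0 = x0 := by
      rw [← h1, Equiv.symm_apply_apply]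
    rw [h1, h2]
  have hmove : σ (D.mk' x0 y1) ≠ D.mk' x0 y1 := by
    rw [hσ_eval, D.px_mk', D.py_mk']
    have h1 : φ x0 = y0 := twoEquiv_apply0 hx01 hxcov hy01 hycov
    have h2 : φ.symm y1 = x1 := by
      have := twoEquiv_apply1 hx01 hxcov hy01 hycov
      rw [← hφ] at this
      rw [← this, Equiv.symm_apply_apply]
    rw [h1, h2]
    intro he
    have := congrArg D.px he
    rw [D.px_mk', D.px_mk'] at this
    exact hx01 this.symm
  have := hfree σ hIsAut _ hfix
  rw [this] at hmove
  exact hmove rfl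

/-- Part 1 of Lemma M -/
theorem star_connected_main [Fintype V] (hl : ∀ v, ¬ Adj v v)
    (htr : TransAut Adj) (hfree : FreeAut Adj) (hconn : WeaklyConnected Adj)
    (D : Dcp Adj) : WeaklyConnected (dstar Adj) := by
  have hfinX := D.finiteX
  have hfinY := D.finiteY
  by_cases h3 : 3 ≤ Nat.card D.X
  · exact D.star_conn_of_three h3
  · by_cases h3' : 3 ≤ Nat.card D.Y
    · exact D.swap.star_conn_of_three (by rw [show Nat.card D.swap.X = Nat.card D.Y from rfl]; exact h3')
    · exfalso
      have h2X := D.two_le_cardX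
      have h2Y := D.two_le_cardY
      exact lemZ D hl htr hfree hconn (by omega) (by omega)

end StmtAux

----------------------------------------------------------------
-- Part 2 of Lemma M: the main combinatorial argument
namespace StmtAux

theorem other_pack {X : Type*} (h : Nat.card X = 2) :
    ∃ o : X → X, (∀ x, o x ≠ x) ∧ (∀ x x', x ≠ x' → x' = o x) ∧ (∀ x, o (o x) = x) := by
  classical
  obtain ⟨x0, x1, hx01, hx⟩ := two_elt h
  refine ⟨fun x => if x = x0 then x1 else x0, ?_, ?_, ?_⟩
  · intro x hx'
    by_cases h' : x = x0
    · simp only [if_pos h'] at hx'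
      exact hx01 (hx'.trans h').symm
    · simp only [if_neg h'] at hx'
      exact h' hx'.symm
  · intro x x' hne
    by_cases h' : x = x0
    · simp only [if_pos h']
      rcases hx x' with h'' | h''
      · exact absurd (h'.trans h''.symm) hne
      · exact h''
    · simp only [if_neg h']
      rcases hx x' with h'' | h''
      · exact h''
      · rcases hx x with hh | hh
        · exact absurd hh h'
        · exact absurd (hh.trans h''.symm) hne
  · intro x
    by_cases h' : x = x0
    · simp only [if_pos h', if_neg (show x1 ≠ x0 from fun e => hx01 e.symm)]
      exact h'.symm
    · simp only [if_neg h', if_pos rfl]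
      rcases hx x with hh | hh
      · exact absurd hh h'
      · exact hh.symm

theorem ncard_eq_of_equiv {α β : Type*} (s : Set α) [Finite β] (e : ↥s ≃ β) :
    s.ncard = Nat.card β := by
  rw [← Nat.card_coe_set_eq, Nat.card_congr e]

variable {V : Type u} {Adj : V → V → Prop}

theorem dstar_loopless : ∀ v : V, ¬ dstar Adj v v := fun _ h => h.1 rfl

/-- non-star-adjacent distinct pairs are digons -/
theorem digon_of_not_dstar {v w : V} (hne : v ≠ w)
    (h1 : ¬ dstar Adj v w) (h2 : ¬ dstar Adj w v) : Adj v w ∧ Adj w v := by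
  unfold dstar at h1 h2
  push_neg at h1 h2
  exact ⟨h2 (fun e => hne e.symm), h1 hne⟩

theorem not_dstar_of_digon {v w : V} (h1 : Adj v w) (h2 : Adj w v) :
    ¬ dstar Adj v w ∧ ¬ dstar Adj w v := by
  unfold dstar
  constructor
  · rintro ⟨-, h⟩; exact h h2
  · rintro ⟨-, h⟩; exact h h1

namespace Dcp

/-- cardinality of a same-first-coordinate class -/
theorem ncard_same_px [Finite V] (D : Dcp Adj) (v : V) :
    {w | D.px w = D.px v}.ncard = Nat.card D.Y := by
  have := D.finiteY
  refine ncard_eq_of_equiv _ ⟨fun w => D.py w.1, fun y => ⟨D.mk' (D.px v) y, D.px_mk' _ _⟩,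
    ?_, ?_⟩
  · rintro ⟨w, hw⟩
    exact Subtype.ext (D.mk'_eq hw (rfl))
  · intro y
    exact D.py_mk' _ _

theorem ncard_same_py [Finite V] (D : Dcp Adj) (v : V) :
    {w | D.py w = D.py v}.ncard = Nat.card D.X := by
  have := D.finiteX
  refine ncard_eq_of_equiv _ ⟨fun w => D.px w.1, fun x => ⟨D.mk' x (D.py v), D.py_mk' _ _⟩,
    ?_, ?_⟩
  · rintro ⟨w, hw⟩
    exact Subtype.ext (D.mk'_eq rfl hw)
  · intro x
    exact D.px_mk' _ _

theorem ncard_col_minus [Finite V] (D : Dcp Adj) (v : V) :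
    {w | D.px w = D.px v ∧ w ≠ v}.ncard = Nat.card D.Y - 1 := by
  have h1 : {w | D.px w = D.px v ∧ w ≠ v} = {w | D.px w = D.px v} \ {v} := by
    ext w; simp [and_comm]
  rw [h1, Set.ncard_diff_singleton_of_mem (by simp : v ∈ {w | D.px w = D.px v}),
    D.ncard_same_px]

theorem ncard_row_minus [Finite V] (D : Dcp Adj) (v : V) :
    {w | D.py w = D.py v ∧ w ≠ v}.ncard = Nat.card D.X - 1 := by
  have h1 : {w | D.py w = D.py v ∧ w ≠ v} = {w | D.py w = D.py v} \ {v} := by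
    ext w; simp [and_comm]
  rw [h1, Set.ncard_diff_singleton_of_mem (by simp : v ∈ {w | D.py w = D.py v}),
    D.ncard_same_py]

end Dcp


theorem ncard_ne_set {α : Type*} [Finite α] (a : α) :
    {x | x ≠ a}.ncard = Nat.card α - 1 := by
  have h1 : {x | x ≠ a} = Set.univ \ {a} := by ext x; simp
  rw [h1, Set.ncard_diff_singleton_of_mem (Set.mem_univ a), Set.ncard_univ]

theorem case1_trich {V : Type u} {Adj : V → V → Prop} [Fintype V]
    (D : Dcp Adj) (E : Dcp (dstar Adj))
    (hl : ∀ v, ¬ Adj v v)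
    (rowsD : ∀ v w, D.py v = D.py w → v ≠ w → Adj v w ∧ Adj w v)
    (rowsE : ∀ v w, E.py v = E.py w → v ≠ w → dstar Adj v w ∧ dstar Adj w v)
    (oD : D.X → D.X) (hoD1 : ∀ x, oD x ≠ x) (hoD2 : ∀ x x', x ≠ x' → x' = oD x)
    (oE : E.X → E.X) (hoE1 : ∀ x, oE x ≠ x) (hoE2 : ∀ x x', x ≠ x' → x' = oE x)
    (hbd : Nat.card E.Y = Nat.card D.Y) (hb3 : 3 ≤ Nat.card D.Y) (v : V) :
    {w | D.px w = D.px v ∧ w ≠ v ∧ ¬Adj v w ∧ ¬Adj w v}.ncard +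
    {w | E.px w = E.px v ∧ w ≠ v ∧ Adj v w ∧ Adj w v}.ncard +
    {w | D.px w = D.px v ∧ ((Adj v w ∧ ¬Adj w v) ∨ (Adj w v ∧ ¬Adj v w))}.ncard = 1 := by
  classical
  have hfinY := D.finiteY
  have hfinEY := E.finiteY
  set b := Nat.card D.Y with hb
  set colD : Set V := {w | D.px w = D.px v ∧ w ≠ v ∧ Adj v w ∧ Adj w v} with hcolD
  set colN : Set V := {w | D.px w = D.px v ∧ w ≠ v ∧ ¬Adj v w ∧ ¬Adj w v} with hcolN
  set colS : Set V := {w | D.px w = D.px v ∧ ((Adj v w ∧ ¬Adj w v) ∨ (Adj w v ∧ ¬Adj v w))}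
    with hcolS
  set uclD : Set V := {w | E.px w = E.px v ∧ w ≠ v ∧ Adj v w ∧ Adj w v} with huclD
  set DBE : Set V := {w | E.px w ≠ E.px v ∧ E.py w ≠ E.py v} with hDBE
  set Dg : Set V := {w | Adj v w ∧ Adj w v} with hDg
  -- partition of the column
  have hpart : {w | D.px w = D.px v ∧ w ≠ v} = (colD ∪ colN) ∪ colS := by
    ext w
    simp only [Set.mem_setOf_eq, Set.mem_union, hcolD, hcolN, hcolS]
    constructor
    · rintro ⟨h1, h2⟩
      by_cases ha : Adj v w <;> by_cases hb' : Adj w v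
      · exact Or.inl (Or.inl ⟨h1, h2, ha, hb'⟩)
      · exact Or.inr ⟨h1, Or.inl ⟨ha, hb'⟩⟩
      · exact Or.inr ⟨h1, Or.inr ⟨hb', ha⟩⟩
      · exact Or.inl (Or.inr ⟨h1, h2, ha, hb'⟩)
    · rintro ((⟨h1, h2, -⟩ | ⟨h1, h2, -⟩) | ⟨h1, h2⟩)
      · exact ⟨h1, h2⟩
      · exact ⟨h1, h2⟩
      · refine ⟨h1, ?_⟩
        rcases h2 with ⟨ha, -⟩ | ⟨ha, -⟩
        · exact fun he => hl v (he ▸ ha)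
        · exact fun he => hl v (he ▸ ha)
  have hdisj1 : Disjoint colD colN := by
    rw [Set.disjoint_left]
    rintro w ⟨-, -, ha, -⟩ ⟨-, -, hb', -⟩
    exact hb' ha
  have hdisj2 : Disjoint (colD ∪ colN) colS := by
    rw [Set.disjoint_left]
    rintro w (⟨-, -, ha, hb'⟩ | ⟨-, -, ha, hb'⟩) ⟨-, hs⟩
    · rcases hs with ⟨-, hc⟩ | ⟨-, hc⟩
      · exact hc hb'
      · exact hc ha
    · rcases hs with ⟨hc, -⟩ | ⟨hc, -⟩
      · exact ha hc
      · exact hb' hc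
  have hcolcard : colD.ncard + colN.ncard + colS.ncard = b - 1 := by
    have h1 := D.ncard_col_minus v
    rw [hpart] at h1
    rw [Set.ncard_union_eq hdisj2, Set.ncard_union_eq hdisj1] at h1
    omega
  -- digons at v, counted two ways
  set rv : V := D.mk' (oD (D.px v)) (D.py v) with hrv
  have hrv_px : D.px rv ≠ D.px v := by rw [hrv, D.px_mk']; exact hoD1 _
  have hrv_py : D.py rv = D.py v := by rw [hrv, D.py_mk']
  have hrv_ne : rv ≠ v := fun he => hrv_px (by rw [he])
  have hrv_dig : Adj v rv ∧ Adj rv v := by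
    have := rowsD rv v hrv_py hrv_ne
    exact ⟨this.2, this.1⟩
  have hDgsplit : Dg = colD ∪ {rv} := by
    ext w
    simp only [hDg, hcolD, Set.mem_setOf_eq, Set.mem_union, Set.mem_singleton_iff]
    constructor
    · rintro ⟨ha, hb'⟩
      have hne : w ≠ v := fun he => hl v (he ▸ ha)
      by_cases hpx : D.px w = D.px v
      · exact Or.inl ⟨hpx, hne, ha, hb'⟩
      · right
        rcases D.adj_coord ha with h | h
        · exact absurd h.symm hpx
        · apply D.ext'
          · rw [hrv, D.px_mk']
            exact hoD2 _ _ (fun e => hpx e.symm)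
          · rw [hrv, D.py_mk']
            exact h.symm
    · rintro (⟨-, -, ha, hb'⟩ | rfl)
      · exact ⟨ha, hb'⟩
      · exact hrv_dig
  have hDgsplit2 : Dg = uclD ∪ DBE := by
    ext w
    simp only [hDg, huclD, hDBE, Set.mem_setOf_eq, Set.mem_union]
    constructor
    · rintro ⟨ha, hb'⟩
      have hne : w ≠ v := fun he => hl v (he ▸ ha)
      have hstar := not_dstar_of_digon ha hb'
      by_cases hpu : E.px w = E.px v
      · exact Or.inl ⟨hpu, hne, ha, hb'⟩
      · right
        refine ⟨hpu, ?_⟩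
        intro hpw
        have := rowsE v w hpw.symm (fun e => hne e.symm)
        exact hstar.1 this.1
    · rintro (⟨-, -, ha, hb'⟩ | ⟨h1, h2⟩)
      · exact ⟨ha, hb'⟩
      · have hne : w ≠ v := fun he => h1 (by rw [he])
        have h1' : ¬ dstar Adj v w :=
          E.not_adj_of_diffboth (fun e => h1 e.symm) (fun e => h2 e.symm)
        have h2' : ¬ dstar Adj w v := E.not_adj_of_diffboth h1 h2
        exact digon_of_not_dstar (fun e => hne e.symm) h1' h2'
  have hdisj3 : Disjoint uclD DBE := by
    rw [Set.disjoint_left]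
    rintro w ⟨h1, -⟩ ⟨h2, -⟩
    exact h2 h1
  have hDBEcard : DBE.ncard = Nat.card E.Y - 1 := by
    have e1 : ↥DBE ≃ ↥{y : E.Y | y ≠ E.py v} :=
      { toFun := fun w => ⟨E.py w.1, w.2.2⟩
        invFun := fun y => ⟨E.mk' (oE (E.px v)) y.1,
          ⟨by rw [E.px_mk']; exact hoE1 _, by rw [E.py_mk']; exact y.2⟩⟩
        left_inv := fun w => Subtype.ext (E.mk'_eq (hoE2 _ _ (fun e => w.2.1 e.symm)) rfl)
        right_inv := fun y => Subtype.ext (E.py_mk' _ _) }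
    rw [ncard_eq_of_equiv DBE e1, Nat.card_coe_set_eq, ncard_ne_set]
  have hdisj4 : Disjoint colD ({rv} : Set V) := by
    simp only [Set.disjoint_singleton_right, hcolD, Set.mem_setOf_eq]
    rintro ⟨h, -⟩
    exact hrv_px h
  have hcount1 : Dg.ncard = colD.ncard + 1 := by
    rw [hDgsplit, Set.ncard_union_eq hdisj4, Set.ncard_singleton]
  have hcount2 : Dg.ncard = uclD.ncard + (Nat.card E.Y - 1) := by
    rw [hDgsplit2, Set.ncard_union_eq hdisj3, hDBEcard]
  omega


theorem case1_no_single {V : Type u} {Adj : V → V → Prop} [Fintype V]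
    (D : Dcp Adj) (E : Dcp (dstar Adj))
    (hl : ∀ v, ¬ Adj v v)
    (rowsD : ∀ v w, D.py v = D.py w → v ≠ w → Adj v w ∧ Adj w v)
    (rowsE : ∀ v w, E.py v = E.py w → v ≠ w → dstar Adj v w ∧ dstar Adj w v)
    (oD : D.X → D.X) (hoD1 : ∀ x, oD x ≠ x) (hoD2 : ∀ x x', x ≠ x' → x' = oD x)
    (oE : E.X → E.X) (hoE1 : ∀ x, oE x ≠ x) (hoE2 : ∀ x x', x ≠ x' → x' = oE x)
    (hbd : Nat.card E.Y = Nat.card D.Y) (hb3 : 3 ≤ Nat.card D.Y)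
    {α β : V} (hAB : Adj α β) (hnBA : ¬ Adj β α) : False := by
  classical
  have hlds : ∀ v : V, ¬ dstar Adj v v := fun v => dstar_loopless v
  have hne : α ≠ β := fun he => hl α (he ▸ hAB)
  have hpx : D.px α = D.px β := by
    rcases D.adj_coord hAB with h | h
    · exact h
    · exact absurd (rowsD α β h hne).2 hnBA
  have hpy : D.py α ≠ D.py β := fun he => hne (D.ext' hpx he)
  have hdsAB : dstar Adj α β := ⟨hne, hnBA⟩
  have hndsBA : ¬ dstar Adj β α := fun h => h.2 hAB
  have hpu : E.px α = E.px β := by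
    rcases E.adj_coord hdsAB with h | h
    · exact h
    · exact absurd (rowsE α β h hne).2 hndsBA
  have hpw : E.py α ≠ E.py β := fun he => hne (E.ext' hpu he)
  -- trichotomy: no within-column non-edges at α nor β
  have htrα := case1_trich D E hl rowsD rowsE oD hoD1 hoD2 oE hoE1 hoE2 hbd hb3 α
  have htrβ := case1_trich D E hl rowsD rowsE oD hoD1 hoD2 oE hoE1 hoE2 hbd hb3 β
  have hSα : 0 < {w | D.px w = D.px α ∧
      ((Adj α w ∧ ¬Adj w α) ∨ (Adj w α ∧ ¬Adj α w))}.ncard := by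
    rw [Set.ncard_pos]
    exact ⟨β, hpx.symm, Or.inl ⟨hAB, hnBA⟩⟩
  have hSβ : 0 < {w | D.px w = D.px β ∧
      ((Adj β w ∧ ¬Adj w β) ∨ (Adj w β ∧ ¬Adj β w))}.ncard := by
    rw [Set.ncard_pos]
    exact ⟨α, hpx, Or.inr ⟨hAB, hnBA⟩⟩
  have hNα : {w | D.px w = D.px α ∧ w ≠ α ∧ ¬Adj α w ∧ ¬Adj w α} = ∅ := by
    rw [← Set.ncard_eq_zero]
    omega
  have hNβ : {w | D.px w = D.px β ∧ w ≠ β ∧ ¬Adj β w ∧ ¬Adj w β} = ∅ := by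
    rw [← Set.ncard_eq_zero]
    omega
  -- γ : the E-row partner of α
  set γ : V := E.mk' (oE (E.px α)) (E.py α) with hγ
  have hγ_pu : E.px γ = oE (E.px α) := E.px_mk' _ _
  have hγ_pw : E.py γ = E.py α := E.py_mk' _ _
  have hγ_ne : γ ≠ α := fun he => hoE1 (E.px α) ((he ▸ hγ_pu : E.px α = oE (E.px α))).symm
  have hγ_star := rowsE γ α (by rw [hγ_pw]) hγ_ne
  have hγ_nonedge : ¬Adj α γ ∧ ¬Adj γ α := ⟨hγ_star.1.2, hγ_star.2.2⟩
  have hγ_px : D.px γ ≠ D.px α := by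
    intro h
    have hmem : γ ∈ {w | D.px w = D.px α ∧ w ≠ α ∧ ¬Adj α w ∧ ¬Adj w α} :=
      ⟨h, hγ_ne, hγ_nonedge.1, hγ_nonedge.2⟩
    rw [hNα] at hmem
    exact hmem
  have hγ_py_ne : D.py γ ≠ D.py α := by
    intro h
    exact hγ_nonedge.1 (rowsD α γ h.symm (fun e => hγ_ne e.symm)).1
  have hγ_py : D.py γ = D.py β := by
    by_contra h''
    have hpxβγ : D.px β ≠ D.px γ := by
      rw [← hpx]
      exact fun e => hγ_px e.symm
    have hd2 : ¬ Adj γ β := D.not_adj_of_diffboth (fun e => hpxβγ e.symm) h''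
    have hβγ_ne : β ≠ γ := fun he => hpxβγ (by rw [he])
    have hsd : dstar Adj β γ := ⟨hβγ_ne, hd2⟩
    rcases E.adj_coord hsd with h | h
    · rw [hγ_pu, ← hpu] at h
      exact hoE1 _ h.symm
    · rw [hγ_pw] at h
      exact hpw h.symm
  -- δ : the E-row partner of β
  set δ : V := E.mk' (oE (E.px β)) (E.py β) with hδ
  have hδ_pu : E.px δ = oE (E.px β) := E.px_mk' _ _
  have hδ_pw : E.py δ = E.py β := E.py_mk' _ _
  have hδ_ne : δ ≠ β := fun he => hoE1 (E.px β) ((he ▸ hδ_pu : E.px β = oE (E.px β))).symm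
  have hδ_star := rowsE δ β (by rw [hδ_pw]) hδ_ne
  have hδ_nonedge : ¬Adj β δ ∧ ¬Adj δ β := ⟨hδ_star.1.2, hδ_star.2.2⟩
  have hδ_px : D.px δ ≠ D.px β := by
    intro h
    have hmem : δ ∈ {w | D.px w = D.px β ∧ w ≠ β ∧ ¬Adj β w ∧ ¬Adj w β} :=
      ⟨h, hδ_ne, hδ_nonedge.1, hδ_nonedge.2⟩
    rw [hNβ] at hmem
    exact hmem
  have hδ_py_ne : D.py δ ≠ D.py β := by
    intro h
    exact hδ_nonedge.1 (rowsD β δ h.symm (fun e => hδ_ne e.symm)).1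
  have hδ_py : D.py δ = D.py α := by
    by_contra h''
    have hpxαδ : D.px α ≠ D.px δ := by
      rw [hpx]
      exact fun e => hδ_px e.symm
    have hd2 : ¬ Adj δ α := D.not_adj_of_diffboth (fun e => hpxαδ e.symm) h''
    have hαδ_ne : α ≠ δ := fun he => hpxαδ (by rw [he])
    have hsd : dstar Adj α δ := ⟨hαδ_ne, hd2⟩
    rcases E.adj_coord hsd with h | h
    · rw [hδ_pu, ← hpu] at h
      exact hoE1 _ h.symm
    · rw [hδ_pw] at h
      exact hpw h
  -- γ and δ share the D-column opposite to α's
  have hδ_px_α : D.px δ ≠ D.px α := by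
    rw [hpx]
    exact hδ_px
  have hpxγδ : D.px γ = D.px δ := by
    have h1 : D.px γ = oD (D.px α) := hoD2 _ _ (fun e => hγ_px e.symm)
    have h2 : D.px δ = oD (D.px α) := hoD2 _ _ (fun e => hδ_px_α e.symm)
    rw [h1, h2]
  -- contradiction via orientation of the single pair
  have hBval : D.B (D.py α) (D.py β) := (D.B_transfer hl hpx).mp hAB
  have hAdjδγ : Adj δ γ := by
    rw [D.B_transfer hl hpxγδ.symm, hδ_py, hγ_py]
    exact hBval
  have hBEval : E.B (E.py α) (E.py β) := (E.B_transfer hlds hpu).mp hdsAB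
  have hdsγδ : dstar Adj γ δ := by
    have hpuγδ : E.px γ = E.px δ := by rw [hγ_pu, hδ_pu, hpu]
    rw [E.B_transfer hlds hpuγδ, hγ_pw, hδ_pw]
    exact hBEval
  exact hdsγδ.2 hAdjδγ


theorem case1_symm_kill {V : Type u} {Adj : V → V → Prop} [Fintype V]
    (D : Dcp Adj) (E : Dcp (dstar Adj))
    (hl : ∀ v, ¬ Adj v v) (hfree : FreeAut Adj)
    (rowsD : ∀ v w, D.py v = D.py w → v ≠ w → Adj v w ∧ Adj w v)
    (rowsE : ∀ v w, E.py v = E.py w → v ≠ w → dstar Adj v w ∧ dstar Adj w v)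
    (oD : D.X → D.X) (hoD1 : ∀ x, oD x ≠ x) (hoD2 : ∀ x x', x ≠ x' → x' = oD x)
    (oE : E.X → E.X) (hoE1 : ∀ x, oE x ≠ x) (hoE2 : ∀ x x', x ≠ x' → x' = oE x)
    (hbd : Nat.card E.Y = Nat.card D.Y) (hb3 : 3 ≤ Nat.card D.Y)
    (hsym : ∀ v w, Adj v w → Adj w v) : False := by
  classical
  have hfinY := D.finiteY
  obtain ⟨x0, -⟩ := D.hX
  -- at most one non-neighbour within a column
  have hNle1 : ∀ v : V, {w | D.px w = D.px v ∧ w ≠ v ∧ ¬Adj v w ∧ ¬Adj w v}.ncard ≤ 1 := by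
    intro v
    have := case1_trich D E hl rowsD rowsE oD hoD1 hoD2 oE hoE1 hoE2 hbd hb3 v
    omega
  -- the non-edge relation on Y
  set NB : D.Y → D.Y → Prop := fun y y' => y ≠ y' ∧ ¬ D.B y y' with hNB
  have hBsym : ∀ y y', D.B y y' → D.B y' y := by
    intro y y' hB
    have h1 : Adj (D.mk' x0 y) (D.mk' x0 y') := by
      rw [D.B_transfer hl (by rw [D.px_mk', D.px_mk']), D.py_mk', D.py_mk']
      exact hB
    have h2 := hsym _ _ h1
    rw [D.B_transfer hl (by rw [D.px_mk', D.px_mk']), D.py_mk', D.py_mk'] at h2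
    exact h2
  have hNBsym : ∀ y y', NB y y' → NB y' y := by
    rintro y y' ⟨h1, h2⟩
    exact ⟨fun e => h1 e.symm, fun hB => h2 (hBsym _ _ hB)⟩
  have hNBuniq : ∀ y y1 y2, NB y y1 → NB y y2 → y1 = y2 := by
    intro y y1 y2 h1 h2
    by_contra hne
    set v := D.mk' x0 y with hv
    have hmem : ∀ y' , NB y y' → D.mk' x0 y' ∈
        {w | D.px w = D.px v ∧ w ≠ v ∧ ¬Adj v w ∧ ¬Adj w v} := by
      rintro y' ⟨hne', hnB⟩
      refine ⟨by rw [D.px_mk', hv, D.px_mk'], ?_, ?_, ?_⟩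
      · intro he
        have := congrArg D.py he
        rw [D.py_mk', hv, D.py_mk'] at this
        exact hne' this.symm
      · rw [D.B_transfer hl (by rw [hv, D.px_mk', D.px_mk']), hv, D.py_mk', D.py_mk']
        exact hnB
      · intro hAdj
        have := hsym _ _ hAdj
        rw [D.B_transfer hl (by rw [hv, D.px_mk', D.px_mk']), hv, D.py_mk', D.py_mk'] at this
        exact hnB this
    have hlt : 1 < {w | D.px w = D.px v ∧ w ≠ v ∧ ¬Adj v w ∧ ¬Adj w v}.ncard := by
      rw [Set.one_lt_ncard (Set.toFinite _)]
      refine ⟨D.mk' x0 y1, hmem y1 h1, D.mk' x0 y2, hmem y2 h2, ?_⟩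
      intro he
      have := congrArg D.py he
      rw [D.py_mk', D.py_mk'] at this
      exact hne this
    have := hNle1 v
    omega
  have hBchar : ∀ y y', D.B y y' ↔ (y ≠ y' ∧ ¬ NB y y') := by
    intro y y'
    constructor
    · intro hB
      refine ⟨?_, fun h => h.2 hB⟩
      intro he
      exact D.B_loopless hl y' (he ▸ hB)
    · rintro ⟨hne, hn⟩
      rw [hNB] at hn
      simp only [not_and, not_not] at hn
      exact hn hne
  -- choose the pair to swap
  have hpair : ∃ y1 y2 : D.Y, y1 ≠ y2 ∧
      (∀ p q, NB p q ↔ NB (Equiv.swap y1 y2 p) (Equiv.swap y1 y2 q)) := by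
    by_cases hex : ∃ y1 y2, NB y1 y2
    · obtain ⟨y1, y2, hNB12⟩ := hex
      refine ⟨y1, y2, hNB12.1, ?_⟩
      have hmono : ∀ p q, NB p q → NB (Equiv.swap y1 y2 p) (Equiv.swap y1 y2 q) := by
        intro p q hpq
        by_cases hp1 : p = y1
        · subst hp1
          have hq : q = y2 := hNBuniq p q y2 hpq hNB12
          subst hq
          rw [Equiv.swap_apply_left, Equiv.swap_apply_right]
          exact hNBsym _ _ hpq
        · by_cases hp2 : p = y2
          · subst hp2
            have hq : q = y1 := hNBuniq p q y1 hpq (hNBsym _ _ hNB12)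
            subst hq
            rw [Equiv.swap_apply_right, Equiv.swap_apply_left]
            exact hNBsym _ _ hpq
          · rw [Equiv.swap_apply_of_ne_of_ne hp1 hp2]
            by_cases hq1 : q = y1
            · subst hq1
              exact absurd (hNBuniq q p y2 (hNBsym _ _ hpq) hNB12) hp2
            · by_cases hq2 : q = y2
              · subst hq2
                exact absurd (hNBuniq q p y1 (hNBsym _ _ hpq) (hNBsym _ _ hNB12)) hp1
              · rw [Equiv.swap_apply_of_ne_of_ne hq1 hq2]
                exact hpq
      intro p q
      constructor
      · exact hmono p q
      · intro h
        have := hmono _ _ h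
        rwa [Equiv.swap_apply_self, Equiv.swap_apply_self] at this
    · push_neg at hex
      obtain ⟨ya, yb, hyab⟩ := D.hY
      exact ⟨ya, yb, hyab, fun p q => iff_of_false (hex p q) (hex _ _)⟩
  obtain ⟨y1, y2, hy12, hswap⟩ := hpair
  set τ : Equiv.Perm D.Y := Equiv.swap y1 y2 with hτ
  have hBpres : ∀ y y', D.B (τ y) (τ y') ↔ D.B y y' := by
    intro y y'
    rw [hBchar, hBchar]
    constructor
    · rintro ⟨h1, h2⟩
      refine ⟨fun e => h1 (by rw [e]), fun h => h2 ((hswap y y').mp h)⟩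
    · rintro ⟨h1, h2⟩
      refine ⟨fun e => h1 (τ.injective e), fun h => h2 ((hswap y y').mpr h)⟩
  set σ : Equiv.Perm V := (D.e.trans ((Equiv.refl D.X).prodCongr τ)).trans D.e.symm
    with hσdef
  have hσ_eval : ∀ v : V, σ v = D.mk' (D.px v) (τ (D.py v)) := fun v => rfl
  have hσpx : ∀ v : V, D.px (σ v) = D.px v := by
    intro v; rw [hσ_eval, D.px_mk']
  have hσpy : ∀ v : V, D.py (σ v) = τ (D.py v) := by
    intro v; rw [hσ_eval, D.py_mk']
  have hIsAut : IsAut Adj σ := by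
    intro v w
    rw [D.adj_iff (σ v) (σ w), D.adj_iff v w]
    rw [hσpx, hσpx, hσpy, hσpy]
    constructor
    · rintro (⟨h1, h2⟩ | ⟨h1, h2⟩)
      · exact Or.inl ⟨h1, (hBpres _ _).mp h2⟩
      · exact Or.inr ⟨τ.injective h1, h2⟩
    · rintro (⟨h1, h2⟩ | ⟨h1, h2⟩)
      · exact Or.inl ⟨h1, (hBpres _ _).mpr h2⟩
      · exact Or.inr ⟨by rw [h1], h2⟩
  obtain ⟨y3, hy31, hy32⟩ := exists_third hb3 y1 y2
  have hfix : σ (D.mk' x0 y3) = D.mk' x0 y3 := by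
    rw [hσ_eval, D.px_mk', D.py_mk', hτ, Equiv.swap_apply_of_ne_of_ne hy31 hy32]
  have := hfree σ hIsAut _ hfix
  have hmove : σ (D.mk' x0 y1) = D.mk' x0 y1 := by rw [this]; rfl
  rw [hσ_eval, D.px_mk', D.py_mk', hτ, Equiv.swap_apply_left] at hmove
  have := congrArg D.py hmove
  rw [D.py_mk', D.py_mk'] at this
  exact hy12 this.symm


/-- applying a nontrivial permutation with a fixed point to the second factor kills freeness -/
theorem col_swap_kill {V : Type u} {Adj : V → V → Prop}
    (D : Dcp Adj) (hfree : FreeAut Adj) (τ : Equiv.Perm D.Y)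
    (hBpres : ∀ y y', D.B (τ y) (τ y') ↔ D.B y y')
    (y_fix : D.Y) (hfixτ : τ y_fix = y_fix)
    (y_mv : D.Y) (hmvτ : τ y_mv ≠ y_mv) : False := by
  classical
  obtain ⟨x0, -⟩ := D.hX
  set σ : Equiv.Perm V := (D.e.trans ((Equiv.refl D.X).prodCongr τ)).trans D.e.symm
    with hσdef
  have hσ_eval : ∀ v : V, σ v = D.mk' (D.px v) (τ (D.py v)) := fun v => rfl
  have hσpx : ∀ v : V, D.px (σ v) = D.px v := by
    intro v; rw [hσ_eval, D.px_mk']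
  have hσpy : ∀ v : V, D.py (σ v) = τ (D.py v) := by
    intro v; rw [hσ_eval, D.py_mk']
  have hIsAut : IsAut Adj σ := by
    intro v w
    rw [D.adj_iff (σ v) (σ w), D.adj_iff v w]
    rw [hσpx, hσpx, hσpy, hσpy]
    constructor
    · rintro (⟨h1, h2⟩ | ⟨h1, h2⟩)
      · exact Or.inl ⟨h1, (hBpres _ _).mp h2⟩
      · exact Or.inr ⟨τ.injective h1, h2⟩
    · rintro (⟨h1, h2⟩ | ⟨h1, h2⟩)
      · exact Or.inl ⟨h1, (hBpres _ _).mpr h2⟩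
      · exact Or.inr ⟨by rw [h1], h2⟩
  have hfix : σ (D.mk' x0 y_fix) = D.mk' x0 y_fix := by
    rw [hσ_eval, D.px_mk', D.py_mk', hfixτ]
  have hid := hfree σ hIsAut _ hfix
  have hmove : σ (D.mk' x0 y_mv) = D.mk' x0 y_mv := by rw [hid]; rfl
  rw [hσ_eval, D.px_mk', D.py_mk'] at hmove
  have := congrArg D.py hmove
  rw [D.py_mk', D.py_mk'] at this
  exact hmvτ this

/-- assembled case a = c = 2 -/
theorem case1_kill {V : Type u} {Adj : V → V → Prop} [Fintype V]
    (hl : ∀ v, ¬ Adj v v) (htr : TransAut Adj) (hfree : FreeAut Adj)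
    (hconn : WeaklyConnected Adj) (hconnstar : WeaklyConnected (dstar Adj))
    (D : Dcp Adj) (E : Dcp (dstar Adj))
    (hDX : Nat.card D.X = 2) (hEX : Nat.card E.X = 2) : False := by
  classical
  have hlds : ∀ v : V, ¬ dstar Adj v v := fun v => dstar_loopless v
  have hbd : Nat.card E.Y = Nat.card D.Y := by
    have h1 := D.card_eq
    have h2 := E.card_eq
    rw [hDX] at h1
    rw [hEX] at h2
    omega
  by_cases hb3 : 3 ≤ Nat.card D.Y
  · have rowsD := rows_digon D hl htr hconn hDX
    have rowsE := rows_digon E hlds (transAut_dstar htr) hconnstar hEX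
    obtain ⟨oD, hoD1, hoD2, -⟩ := other_pack hDX
    obtain ⟨oE, hoE1, hoE2, -⟩ := other_pack hEX
    by_cases hsingle : ∃ α β, Adj α β ∧ ¬ Adj β α
    · obtain ⟨α, β, h1, h2⟩ := hsingle
      exact case1_no_single D E hl rowsD rowsE oD hoD1 hoD2 oE hoE1 hoE2 hbd hb3 h1 h2
    · push_neg at hsingle
      exact case1_symm_kill D E hl hfree rowsD rowsE oD hoD1 hoD2 oE hoE1 hoE2 hbd hb3 hsingle
  · have h2Y := D.two_le_cardY
    exact lemZ D hl htr hfree hconn hDX (by omega)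

/-- the tight case -/
theorem tight_kill {V : Type u} {Adj : V → V → Prop} [Fintype V]
    (hl : ∀ v, ¬ Adj v v) (htr : TransAut Adj) (hfree : FreeAut Adj)
    (hconn : WeaklyConnected Adj)
    (D : Dcp Adj) (E : Dcp (dstar Adj))
    (hsum : Nat.card D.X + Nat.card D.Y + Nat.card E.X + Nat.card E.Y = Nat.card V + 3) :
    False := by
  classical
  have hfinDX := D.finiteX
  have hfinDY := D.finiteY
  have hfinEX := E.finiteX
  have hfinEY := E.finiteY
  have ha2 := D.two_le_cardX
  have hb2 := D.two_le_cardY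
  have hc2 := E.two_le_cardX
  have hd2 := E.two_le_cardY
  -- orthogonality from the tight covering
  have horth : ∀ v w : V, w ≠ v → (D.px w = D.px v ∨ D.py w = D.py v) →
      (E.px w = E.px v ∨ E.py w = E.py v) → False := by
    intro v w hwv hD hE
    set P : Set V := {w | (D.px w = D.px v ∨ D.py w = D.py v) ∧ w ≠ v} with hP
    set Q : Set V := {w | (E.px w = E.px v ∨ E.py w = E.py v) ∧ w ≠ v} with hQ
    have hcover : Set.univ \ {v} = P ∪ Q := by
      ext u
      simp only [Set.mem_diff, Set.mem_univ, Set.mem_singleton_iff, true_and, Set.mem_union,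
        hP, hQ, Set.mem_setOf_eq]
      constructor
      · intro hu
        by_cases hq : E.px u = E.px v ∨ E.py u = E.py v
        · exact Or.inr ⟨hq, hu⟩
        · push_neg at hq
          have hns1 : ¬ dstar Adj v u := E.not_adj_of_diffboth
            (fun e => hq.1 e.symm) (fun e => hq.2 e.symm)
          have hns2 : ¬ dstar Adj u v := E.not_adj_of_diffboth hq.1 hq.2
          have hdig := digon_of_not_dstar (fun e => hu e.symm) hns1 hns2
          exact Or.inl ⟨(D.adj_coord hdig.2 : _), hu⟩
      · rintro (⟨-, h⟩ | ⟨-, h⟩) <;> exact h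
    have hPsub : P ⊆ {w | D.px w = D.px v ∧ w ≠ v} ∪ {w | D.py w = D.py v ∧ w ≠ v} := by
      rintro u ⟨h1 | h1, h2⟩
      · exact Or.inl ⟨h1, h2⟩
      · exact Or.inr ⟨h1, h2⟩
    have hQsub : Q ⊆ {w | E.px w = E.px v ∧ w ≠ v} ∪ {w | E.py w = E.py v ∧ w ≠ v} := by
      rintro u ⟨h1 | h1, h2⟩
      · exact Or.inl ⟨h1, h2⟩
      · exact Or.inr ⟨h1, h2⟩
    have hPcard : P.ncard ≤ (Nat.card D.Y - 1) + (Nat.card D.X - 1) := by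
      refine le_trans (Set.ncard_le_ncard hPsub (Set.toFinite _)) ?_
      refine le_trans (Set.ncard_union_le _ _) ?_
      rw [D.ncard_col_minus, D.ncard_row_minus]
    have hQcard : Q.ncard ≤ (Nat.card E.Y - 1) + (Nat.card E.X - 1) := by
      refine le_trans (Set.ncard_le_ncard hQsub (Set.toFinite _)) ?_
      refine le_trans (Set.ncard_union_le _ _) ?_
      rw [E.ncard_col_minus, E.ncard_row_minus]
    have huniv : (Set.univ \ {v} : Set V).ncard = Nat.card V - 1 := by
      rw [Set.ncard_diff_singleton_of_mem (Set.mem_univ v), Set.ncard_univ]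
    have hsumPQ : (P ∪ Q).ncard + (P ∩ Q).ncard = P.ncard + Q.ncard :=
      Set.ncard_union_add_ncard_inter P Q (Set.toFinite _) (Set.toFinite _)
    have hempty : (P ∩ Q).ncard = 0 := by
      rw [← hcover] at hsumPQ
      rw [huniv] at hsumPQ
      omega
    have : w ∈ P ∩ Q := ⟨⟨hD, hwv⟩, ⟨hE, hwv⟩⟩
    rw [Set.ncard_eq_zero (Set.toFinite _)] at hempty
    rw [hempty] at this
    exact this
  -- injections between classes
  obtain ⟨v0x, -⟩ := D.hX
  obtain ⟨v0y, -⟩ := D.hY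
  set v0 : V := D.mk' v0x v0y with hv0
  have : Nonempty V := ⟨v0⟩
  have hn : 0 < Nat.card V := Nat.card_pos
  -- b ≤ c
  have hbc : Nat.card D.Y ≤ Nat.card E.X := by
    have hIO : Set.InjOn E.px {w | D.px w = D.px v0} := by
      intro w hw w' hw' he
      by_contra hne
      exact horth w w' (fun e => hne e.symm) (Or.inl (hw'.trans hw.symm))
        (Or.inl he.symm)
    calc Nat.card D.Y = {w | D.px w = D.px v0}.ncard := (D.ncard_same_px v0).symm
      _ = (E.px '' {w | D.px w = D.px v0}).ncard := (Set.ncard_image_of_injOn hIO).symm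
      _ ≤ (Set.univ : Set E.X).ncard := Set.ncard_le_ncard (Set.subset_univ _) (Set.toFinite _)
      _ = Nat.card E.X := Set.ncard_univ _
  have hca : Nat.card E.X ≤ Nat.card D.X := by
    have hIO : Set.InjOn D.px {w | E.py w = E.py v0} := by
      intro w hw w' hw' he
      by_contra hne
      exact horth w w' (fun e => hne e.symm) (Or.inl he.symm)
        (Or.inr (hw'.trans hw.symm))
    calc Nat.card E.X = {w | E.py w = E.py v0}.ncard := (E.ncard_same_py v0).symm
      _ = (D.px '' {w | E.py w = E.py v0}).ncard := (Set.ncard_image_of_injOn hIO).symm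
      _ ≤ (Set.univ : Set D.X).ncard := Set.ncard_le_ncard (Set.subset_univ _) (Set.toFinite _)
      _ = Nat.card D.X := Set.ncard_univ _
  have had : Nat.card D.X ≤ Nat.card E.Y := by
    have hIO : Set.InjOn E.py {w | D.py w = D.py v0} := by
      intro w hw w' hw' he
      by_contra hne
      exact horth w w' (fun e => hne e.symm) (Or.inr (hw'.trans hw.symm))
        (Or.inr he.symm)
    calc Nat.card D.X = {w | D.py w = D.py v0}.ncard := (D.ncard_same_py v0).symm
      _ = (E.py '' {w | D.py w = D.py v0}).ncard := (Set.ncard_image_of_injOn hIO).symm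
      _ ≤ (Set.univ : Set E.Y).ncard := Set.ncard_le_ncard (Set.subset_univ _) (Set.toFinite _)
      _ = Nat.card E.Y := Set.ncard_univ _
  have hdb : Nat.card E.Y ≤ Nat.card D.Y := by
    have hIO : Set.InjOn D.py {w | E.px w = E.px v0} := by
      intro w hw w' hw' he
      by_contra hne
      exact horth w w' (fun e => hne e.symm) (Or.inr he.symm)
        (Or.inl (hw'.trans hw.symm))
    calc Nat.card E.Y = {w | E.px w = E.px v0}.ncard := (E.ncard_same_px v0).symm
      _ = (D.py '' {w | E.px w = E.px v0}).ncard := (Set.ncard_image_of_injOn hIO).symm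
      _ ≤ (Set.univ : Set D.Y).ncard := Set.ncard_le_ncard (Set.subset_univ _) (Set.toFinite _)
      _ = Nat.card D.Y := Set.ncard_univ _
  -- all equal, m = 3
  set m := Nat.card D.X with hm
  have hma : Nat.card D.Y = m := by omega
  have hmc : Nat.card E.X = m := by omega
  have hmd : Nat.card E.Y = m := by omega
  have hnm : Nat.card V = m * m := by
    have := D.card_eq
    rw [← hm, hma] at this
    exact this
  have hm3 : m = 3 := by
    have h1 : m * m + 3 = 4 * m := by omega
    nlinarith
  -- every pair sharing a D-coordinate is a digon
  have hdig : ∀ v w : V, w ≠ v → (D.px w = D.px v ∨ D.py w = D.py v) →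
      Adj v w ∧ Adj w v := by
    intro v w hne hshare
    have hq : ¬ (E.px w = E.px v ∨ E.py w = E.py v) := fun hq => horth v w hne hshare hq
    push_neg at hq
    have hns1 : ¬ dstar Adj v w := E.not_adj_of_diffboth (fun e => hq.1 e.symm)
      (fun e => hq.2 e.symm)
    have hns2 : ¬ dstar Adj w v := E.not_adj_of_diffboth hq.1 hq.2
    exact digon_of_not_dstar (fun e => hne e.symm) hns1 hns2
  -- B is the complete digon relation
  have hBiff : ∀ y y' : D.Y, D.B y y' ↔ y ≠ y' := by
    intro y y'
    constructor
    · intro hB he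
      exact D.B_loopless hl y' (he ▸ hB)
    · intro hne
      have h1 : (D.mk' v0x y') ≠ (D.mk' v0x y) := by
        intro he
        have := congrArg D.py he
        rw [D.py_mk', D.py_mk'] at this
        exact hne this.symm
      have := (hdig (D.mk' v0x y) (D.mk' v0x y') h1
        (Or.inl (by rw [D.px_mk', D.px_mk']))).1
      rw [D.B_transfer hl (by rw [D.px_mk', D.px_mk']), D.py_mk', D.py_mk'] at this
      exact this
  -- swap two Y-values fixing a third
  obtain ⟨y1, y2, hy12⟩ := D.hY
  obtain ⟨y3, hy31, hy32⟩ := exists_third (by omega : 3 ≤ Nat.card D.Y) y1 y2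
  refine col_swap_kill D hfree (Equiv.swap y1 y2) ?_ y3 ?_ y1 ?_
  · intro y y'
    rw [hBiff, hBiff]
    constructor
    · intro h he
      exact h (by rw [he])
    · intro h he
      exact h ((Equiv.swap y1 y2).injective he)
  · exact Equiv.swap_apply_of_ne_of_ne hy31 hy32
  · rw [Equiv.swap_apply_left]
    exact fun e => hy12 e.symm


theorem arith_split (a b c d n : ℕ) (ha : 2 ≤ a) (hb : 2 ≤ b) (hc : 2 ≤ c) (hd : 2 ≤ d)
    (h1 : a * b = n) (h2 : c * d = n) (h3 : n + 3 ≤ a + b + c + d) :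
    ((a = 2 ∨ b = 2) ∧ (c = 2 ∨ d = 2)) ∨ a + b + c + d = n + 3 := by
  by_cases hA : (a = 2 ∨ b = 2) ∧ (c = 2 ∨ d = 2)
  · exact Or.inl hA
  by_cases hS : a + b + c + d = n + 3
  · exact Or.inr hS
  exfalso
  have hsum4 : n + 4 ≤ a + b + c + d := by omega
  have h4 := not_and_or.mp hA
  have key3 : ∀ x y : ℕ, 3 ≤ x → 3 ≤ y → 3 * (x + y) ≤ x * y + 9 := by
    intro x y hx hy; nlinarith
  have key2 : ∀ x y : ℕ, 2 ≤ x → 2 ≤ y → 2 * (x + y) ≤ x * y + 4 := by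
    intro x y hx hy; nlinarith
  rcases h4 with h4 | h4
  · push_neg at h4
    have h3a : 3 ≤ a := by omega
    have h3b : 3 ≤ b := by omega
    have k1 := key3 a b h3a h3b
    have k2 := key2 c d hc hd
    have hn9 : 9 ≤ n := by
      have : 3 * 3 ≤ a * b := Nat.mul_le_mul h3a h3b
      omega
    rw [h1] at k1
    rw [h2] at k2
    omega
  · push_neg at h4
    have h3c : 3 ≤ c := by omega
    have h3d : 3 ≤ d := by omega
    have k1 := key3 c d h3c h3d
    have k2 := key2 a b ha hb
    have hn9 : 9 ≤ n := by
      have : 3 * 3 ≤ c * d := Nat.mul_le_mul h3c h3d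
      omega
    rw [h1] at k2
    rw [h2] at k1
    omega

theorem monster {V : Type u} {Adj : V → V → Prop} [Fintype V]
    (hl : ∀ v, ¬ Adj v v) (htr : TransAut Adj) (hfree : FreeAut Adj)
    (hconn : WeaklyConnected Adj) (hconnstar : WeaklyConnected (dstar Adj))
    (D : Dcp Adj) (E : Dcp (dstar Adj)) : False := by
  classical
  have hfinDX := D.finiteX
  have hfinDY := D.finiteY
  have hfinEX := E.finiteX
  have hfinEY := E.finiteY
  have ha2 := D.two_le_cardX
  have hb2 := D.two_le_cardY
  have hc2 := E.two_le_cardX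
  have hd2 := E.two_le_cardY
  obtain ⟨v0x, -⟩ := D.hX
  obtain ⟨v0y, -⟩ := D.hY
  set v0 : V := D.mk' v0x v0y with hv0
  -- the covering bound
  have hcount : Nat.card V + 3 ≤
      Nat.card D.X + Nat.card D.Y + Nat.card E.X + Nat.card E.Y := by
    have hcov : Set.univ \ {v0} ⊆
        ({w | D.px w = D.px v0 ∧ w ≠ v0} ∪ {w | D.py w = D.py v0 ∧ w ≠ v0}) ∪
        ({w | E.px w = E.px v0 ∧ w ≠ v0} ∪ {w | E.py w = E.py v0 ∧ w ≠ v0}) := by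
      intro u hu
      simp only [Set.mem_diff, Set.mem_univ, Set.mem_singleton_iff, true_and] at hu
      simp only [Set.mem_union, Set.mem_setOf_eq]
      by_cases hq : E.px u = E.px v0 ∨ E.py u = E.py v0
      · rcases hq with h | h
        · exact Or.inr (Or.inl ⟨h, hu⟩)
        · exact Or.inr (Or.inr ⟨h, hu⟩)
      · push_neg at hq
        have hns1 : ¬ dstar Adj v0 u := E.not_adj_of_diffboth
          (fun e => hq.1 e.symm) (fun e => hq.2 e.symm)
        have hns2 : ¬ dstar Adj u v0 := E.not_adj_of_diffboth hq.1 hq.2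
        have hdig := digon_of_not_dstar (fun e => hu e.symm) hns1 hns2
        rcases D.adj_coord hdig.2 with h | h
        · exact Or.inl (Or.inl ⟨h, hu⟩)
        · exact Or.inl (Or.inr ⟨h, hu⟩)
    have : Nonempty V := ⟨v0⟩
    have hn : 0 < Nat.card V := Nat.card_pos
    have huniv : (Set.univ \ {v0} : Set V).ncard = Nat.card V - 1 := by
      rw [Set.ncard_diff_singleton_of_mem (Set.mem_univ v0), Set.ncard_univ]
    have hle := Set.ncard_le_ncard hcov (Set.toFinite _)
    rw [huniv] at hle
    have hle2 := le_trans hle (Set.ncard_union_le _ _)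
    have hle3 := le_trans hle2 (Nat.add_le_add (Set.ncard_union_le _ _) (Set.ncard_union_le _ _))
    rw [D.ncard_col_minus, D.ncard_row_minus, E.ncard_col_minus, E.ncard_row_minus] at hle3
    omega
  have hcards : Nat.card D.X * Nat.card D.Y = Nat.card V := D.card_eq.symm
  have hcards' : Nat.card E.X * Nat.card E.Y = Nat.card V := E.card_eq.symm
  rcases arith_split _ _ _ _ _ ha2 hb2 hc2 hd2 hcards hcards' hcount with ⟨hD2, hE2⟩ | htight
  · -- normalize so that the first factors have exactly 2 elements
    have hD' : ∃ D2 : Dcp Adj, Nat.card D2.X = 2 := by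
      rcases hD2 with h | h
      · exact ⟨D, h⟩
      · exact ⟨D.swap, h⟩
    have hE' : ∃ E2 : Dcp (dstar Adj), Nat.card E2.X = 2 := by
      rcases hE2 with h | h
      · exact ⟨E, h⟩
      · exact ⟨E.swap, h⟩
    obtain ⟨D2, hD2'⟩ := hD'
    obtain ⟨E2, hE2'⟩ := hE'
    exact case1_kill hl htr hfree hconn hconnstar D2 E2 hD2' hE2'
  · exact tight_kill hl htr hfree hconn D E htight

end StmtAux

----------------------------------------------------------------
-- Lemma M (statement) and the main flow
namespace StmtAux

theorem dstar_congr {V : Type*} {Adj Adj' : V → V → Prop} (h : ∀ u v, Adj u v ↔ Adj' u v) :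
    ∀ u v, dstar Adj u v ↔ dstar Adj' u v := by
  intro u v
  unfold dstar
  rw [h v u]

theorem lemmaM {V : Type u} [Fintype V] (Adj : V → V → Prop)
    (hl : ∀ v, ¬ Adj v v)
    (reg : ∀ v w : V, ∃! σ : digraphAut Adj, (σ : Equiv.Perm V) v = w)
    (hconn : WeaklyConnected Adj)
    (hdec : ∃ (X Y : Type u) (A : X → X → Prop) (B : Y → Y → Prop) (e : V ≃ X × Y),
        (∃ x₁ x₂ : X, x₁ ≠ x₂) ∧ (∃ y₁ y₂ : Y, y₁ ≠ y₂) ∧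
          ∀ v w : V, Adj v w ↔ cartAdj A B (e v) (e w)) :
    WeaklyConnected (dstar Adj) ∧ IsPrimeDigraph (dstar Adj) := by
  classical
  have htr : TransAut Adj := transAut_of_reg reg
  have hfree : FreeAut Adj := freeAut_of_reg reg
  obtain ⟨X, Y, A, B, e, hX, hY, hAdj⟩ := hdec
  set D : Dcp Adj := ⟨X, Y, A, B, e, hX, hY, hAdj⟩ with hD
  have hwc : WeaklyConnected (dstar Adj) := star_connected_main hl htr hfree hconn D
  refine ⟨hwc, ?_, ?_⟩
  · obtain ⟨x1, x2, hx⟩ := hX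
    obtain ⟨y1, -⟩ := hY
    refine ⟨e.symm (x1, y1), e.symm (x2, y1), ?_⟩
    intro he
    have := e.symm.injective he
    exact hx (congrArg Prod.fst this)
  · rintro ⟨U, W, AU, BW, e', hU, hW, hAdj'⟩
    set E : Dcp (dstar Adj) := ⟨U, W, AU, BW, e', hU, hW, hAdj'⟩ with hE
    exact monster hl htr hfree hconn hwc D E

variable {G : Type u} [Group G]

theorem main_aux [Fintype G] [Nontrivial G] {S₀ : Set G} (h : IsDRR G (cayAdj S₀)) :
    ∃ S : Set G, (S = S₀ \ {1} ∨ S = Sstar (S₀ \ {1})) ∧ IsDRR G (cayAdj S) ∧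
      WeaklyConnected (cayAdj S) ∧ IsPrimeDigraph (cayAdj S) := by
  classical
  obtain ⟨g0, hg0⟩ := exists_ne (1 : G)
  have hA0 := aut_eq_of_isDRR h
  set S₁ : Set G := S₀ \ {1} with hS₁
  have hA1 : digraphAut (cayAdj S₁) = regularRep G := by
    rw [hS₁, aut_sdiff_one, hA0]
  have h1 : (1:G) ∉ S₁ := by simp [hS₁]
  have hl : ∀ v : G, ¬ cayAdj S₁ v v := cayAdj_loopless h1
  set S₂ : Set G := Sstar S₁ with hS₂
  have hA2 : digraphAut (cayAdj S₂) = regularRep G := by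
    rw [hS₂, aut_Sstar h1, hA1]
  have h1' : (1:G) ∉ S₂ := one_not_mem_Sstar _
  have hl' : ∀ v : G, ¬ cayAdj S₂ v v := cayAdj_loopless h1'
  have hDRR1 : IsDRR G (cayAdj S₁) := isDRR_of_aut_eq hA1
  have hDRR2 : IsDRR G (cayAdj S₂) := isDRR_of_aut_eq hA2
  have hnontriv : ∃ x y : G, x ≠ y := ⟨g0, 1, hg0⟩
  have hstar12 : ∀ u v : G, cayAdj S₂ u v ↔ dstar (cayAdj S₁) u v := cayAdj_Sstar
  have hstar21 : ∀ u v : G, dstar (cayAdj S₂) u v ↔ cayAdj S₁ u v := by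
    intro u v
    rw [dstar_congr hstar12 u v, dstar_dstar hl]
  by_cases hc1 : WeaklyConnected (cayAdj S₁)
  · by_cases hp1 : IsPrimeDigraph (cayAdj S₁)
    · exact ⟨S₁, Or.inl rfl, hDRR1, hc1, hp1⟩
    · have hdec : ∃ (X Y : Type u) (A : X → X → Prop) (B : Y → Y → Prop) (e : G ≃ X × Y),
          (∃ x₁ x₂ : X, x₁ ≠ x₂) ∧ (∃ y₁ y₂ : Y, y₁ ≠ y₂) ∧
            ∀ v w : G, cayAdj S₁ v w ↔ cartAdj A B (e v) (e w) := by
        unfold IsPrimeDigraph at hp1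
        push_neg at hp1
        exact hp1 hnontriv
      obtain ⟨hwc, hpr⟩ := lemmaM (cayAdj S₁) hl hDRR1.2 hc1 hdec
      refine ⟨S₂, Or.inr rfl, hDRR2, ?_, ?_⟩
      · exact weaklyConnected_congr (fun u v => (hstar12 u v).symm) hwc
      · exact isPrime_congr (fun u v => (hstar12 u v).symm) hpr
  · have hc2 : WeaklyConnected (cayAdj S₂) := by
      have := dstar_connected_of_not_connected hc1
      exact weaklyConnected_congr (fun u v => (hstar12 u v).symm) this
    by_cases hp2 : IsPrimeDigraph (cayAdj S₂)
    · exact ⟨S₂, Or.inr rfl, hDRR2, hc2, hp2⟩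
    · exfalso
      have hdec : ∃ (X Y : Type u) (A : X → X → Prop) (B : Y → Y → Prop) (e : G ≃ X × Y),
          (∃ x₁ x₂ : X, x₁ ≠ x₂) ∧ (∃ y₁ y₂ : Y, y₁ ≠ y₂) ∧
            ∀ v w : G, cayAdj S₂ v w ↔ cartAdj A B (e v) (e w) := by
        unfold IsPrimeDigraph at hp2
        push_neg at hp2
        exact hp2 hnontriv
      obtain ⟨hwc, _⟩ := lemmaM (cayAdj S₂) hl' hDRR2.2 hc2 hdec
      exact hc1 (weaklyConnected_congr hstar21 hwc)

end StmtAux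


open StmtAux

/-- If a nontrivial finite group admits a DRR, then it admits one that
is weakly connected and prime with respect to the cartesian product; likewise for GRRs
(with "connected" in place of "weakly connected", which coincide for graphs). -/
theorem exists_prime_connected_DRR_GRR {G : Type*} [Group G] [Fintype G] [Nontrivial G] :
    (HasDRR G →
      ∃ S : Set G, IsDRR G (cayAdj S) ∧ WeaklyConnected (cayAdj S) ∧
        IsPrimeDigraph (cayAdj S)) ∧
    (HasGRR G →
      ∃ S : Set G, (∀ s ∈ S, s⁻¹ ∈ S) ∧ IsGRR G (cayAdj S) ∧
        WeaklyConnected (cayAdj S) ∧ IsPrimeDigraph (cayAdj S)) := by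
  constructor
  · rintro ⟨S₀, hS₀⟩
    obtain ⟨S, _, hDRR, hwc, hpr⟩ := main_aux hS₀
    exact ⟨S, hDRR, hwc, hpr⟩
  · rintro ⟨S₀, hinv, hsym, hDRR₀⟩
    obtain ⟨S, hform, hDRR, hwc, hpr⟩ := main_aux hDRR₀
    have hinv1 : ∀ s ∈ S₀ \ {1}, s⁻¹ ∈ S₀ \ {1} := by
      rintro s ⟨hs, hs1⟩
      refine ⟨hinv s hs, ?_⟩
      simp only [Set.mem_singleton_iff] at hs1 ⊢
      intro he
      exact hs1 (by rw [← inv_inv s, he]; group)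
    have hinvS : ∀ s ∈ S, s⁻¹ ∈ S := by
      rcases hform with rfl | rfl
      · exact hinv1
      · exact Sstar_symm hinv1
    exact ⟨S, hinvS, ⟨symm_cayAdj hinvS, hDRR⟩, hwc, hpr⟩
end
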